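/- arXiv:0908.4499 — 9 statements merged into one kernel-verified Lean document; each statement's English description precedes it below -/
import Mathlib

section
/- Let V be a vector space over a field F, let Y1, Y2, Y3 be subsets of V, let X1 ⊆ Y1 and X2 ⊆ Y2, and let v ∈ span(Y3). Then v ∈ span(X1 ∪ X2) if and only if there exist v1 ∈ span(X1) ∩ span(Y2 ∪ Y3) and v2 ∈ span(X2) ∩ span(Y1 ∪ Y3) with v = v1 + v2. -/
/-- Let `Y1, Y2, Y3` be subsets of an `F`-vector space `V`, `X1 ⊆ Y1`, `X2 ⊆ Y2`, and
`v ∈ span Y3`. Then `v ∈ span (X1 ∪ X2)` iff there exist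
`v1 ∈ span X1 ∩ span (Y2 ∪ Y3)` and `v2 ∈ span X2 ∩ span (Y1 ∪ Y3)` with `v = v1 + v2`. -/
theorem mem_span_union_iff_boundary_decomposition {F V : Type*} [Field F] [AddCommGroup V]
    [Module F V] (Y1 Y2 Y3 X1 X2 : Set V) (hX1 : X1 ⊆ Y1) (hX2 : X2 ⊆ Y2)
    (v : V) (hv : v ∈ Submodule.span F Y3) :
    v ∈ Submodule.span F (X1 ∪ X2) ↔
      ∃ v1 ∈ Submodule.span F X1 ⊓ Submodule.span F (Y2 ∪ Y3),
        ∃ v2 ∈ Submodule.span F X2 ⊓ Submodule.span F (Y1 ∪ Y3), v = v1 + v2 := by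
  constructor
  · intro h
    rw [Submodule.span_union, Submodule.mem_sup] at h
    obtain ⟨v1, h1, v2, h2, hsum⟩ := h
    have hY23 : v1 ∈ Submodule.span F (Y2 ∪ Y3) := by
      have : v1 = v - v2 := by rw [← hsum]; abel
      rw [this]
      exact sub_mem (Submodule.span_mono Set.subset_union_right hv)
        (Submodule.span_mono (hX2.trans Set.subset_union_left) h2)
    have hY13 : v2 ∈ Submodule.span F (Y1 ∪ Y3) := by
      have : v2 = v - v1 := by rw [← hsum]; abel
      rw [this]
      exact sub_mem (Submodule.span_mono Set.subset_union_right hv)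
        (Submodule.span_mono (hX1.trans Set.subset_union_left) h1)
    exact ⟨v1, ⟨h1, hY23⟩, v2, ⟨h2, hY13⟩, hsum.symm⟩
  · rintro ⟨v1, ⟨h1, -⟩, v2, ⟨h2, -⟩, rfl⟩
    exact add_mem (Submodule.span_mono Set.subset_union_left h1)
      (Submodule.span_mono Set.subset_union_right h2)
end

section
/- Let M1 and M2 be matroids on disjoint finite ground sets S1 and S2, let p1 ∈ S1 and p2 ∈ S2 be elements that are not loops, and let p be an element not in S1 ∪ S2. Set E = (S1 \ {p1}) ∪ (S2 \ {p2}) ∪ {p}. Define C_S to be the collection of subsets of E consisting of: all circuits of M1 not containing p1, all circuits of M2 not containing p2, and all sets (C1 \ {p1}) ∪ (C2 \ {p2}) ∪ {p} where C1 is a circuit of M1 containing p1 and C2 is a circuit of M2 containing p2. Then there exists a matroid on E whose circuits are exactly the members of C_S (the series connection of M1 and M2). -/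
/-- A circuit of a matroid: a minimal dependent set. -/
def Matroid.Circuit' {α : Type*} (M : Matroid α) (C : Set α) : Prop :=
  M.Dep C ∧ ∀ D : Set α, D ⊂ C → ¬ M.Dep D

namespace SC

variable {α : Type*}

def Indep (M1 M2 : Matroid α) (p1 p2 p : α) (I : Set α) : Prop :=
  I ⊆ (M1.E \ {p1}) ∪ (M2.E \ {p2}) ∪ {p} ∧
  M1.Indep (I ∩ M1.E) ∧ M2.Indep (I ∩ M2.E) ∧
  (p ∈ I → M1.Indep ((I ∩ M1.E) ∪ {p1}) ∨ M2.Indep ((I ∩ M2.E) ∪ {p2}))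

lemma ground_comm (M1 M2 : Matroid α) (p1 p2 p : α) :
    (M2.E \ {p2}) ∪ (M1.E \ {p1}) ∪ {p} = (M1.E \ {p1}) ∪ (M2.E \ {p2}) ∪ {p} := by
  rw [Set.union_comm (M2.E \ {p2})]

lemma indep_symm {M1 M2 : Matroid α} {p1 p2 p : α} {I : Set α}
    (h : Indep M1 M2 p1 p2 p I) : Indep M2 M1 p2 p1 p I :=
  ⟨by rw [ground_comm]; exact h.1, h.2.2.1, h.2.1, fun hp => (h.2.2.2 hp).symm⟩

lemma indep_subset {M1 M2 : Matroid α} {p1 p2 p : α} {I J : Set α}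
    (hJ : Indep M1 M2 p1 p2 p J) (hIJ : I ⊆ J) : Indep M1 M2 p1 p2 p I := by
  refine ⟨hIJ.trans hJ.1, hJ.2.1.subset (by gcongr), hJ.2.2.1.subset (by gcongr), fun hp => ?_⟩
  rcases hJ.2.2.2 (hIJ hp) with h | h
  · exact Or.inl (h.subset (by gcongr))
  · exact Or.inr (h.subset (by gcongr))

lemma circuit'_iff {M : Matroid α} {C : Set α} :
    M.Circuit' C ↔ M.Dep C ∧ ∀ D, D ⊂ C → M.Indep D := by
  constructor
  · rintro ⟨hd, hmin⟩
    refine ⟨hd, fun D hD => by_contra fun hi => hmin D hD ⟨hi, hD.subset.trans hd.subset_ground⟩⟩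
  · rintro ⟨hd, hmin⟩; exact ⟨hd, fun D hD => (hmin D hD).not_dep⟩

lemma exists_circuit'_subset {M : Matroid α} {X : Set α} (hfin : X.Finite)
    (hX : M.Dep X) : ∃ C, C ⊆ X ∧ M.Circuit' C := by
  obtain ⟨C, ⟨hCX, hCdep⟩, hmin⟩ :=
    Set.Finite.exists_minimalFor id {Y | Y ⊆ X ∧ M.Dep Y}
      ((hfin.finite_subsets.subset (fun Y hY => hY.1)))
      ⟨X, subset_rfl, hX⟩
  refine ⟨C, hCX, hCdep, fun D hD hDdep => ?_⟩
  have := hmin (j := D) ⟨hD.subset.trans hCX, hDdep⟩ hD.subset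
  exact hD.ne (subset_antisymm hD.subset this)

lemma inter1 {M1 M2 : Matroid α} {p1 p2 p : α} (hdisj : Disjoint M1.E M2.E)
    (hp : p ∉ M1.E ∪ M2.E) {C1 C2 : Set α} (hC1 : C1 ⊆ M1.E) (hC2 : C2 ⊆ M2.E) :
    ((C1 \ {p1}) ∪ (C2 \ {p2}) ∪ {p}) ∩ M1.E = C1 \ {p1} := by
  have hd := Set.disjoint_left.mp hdisj
  ext x
  simp only [Set.mem_inter_iff, Set.mem_union, Set.mem_diff, Set.mem_singleton_iff]
  constructor
  · rintro ⟨(⟨h, hne⟩ | ⟨h, _⟩) | rfl, hx1⟩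
    · exact ⟨h, hne⟩
    · exact absurd (hC2 h) (fun h2 => hd hx1 h2)
    · exact absurd (Or.inl hx1) hp
  · rintro ⟨h, hne⟩
    exact ⟨Or.inl (Or.inl ⟨h, hne⟩), hC1 h⟩

lemma inter2 {M1 M2 : Matroid α} {p1 p2 p : α} (hdisj : Disjoint M1.E M2.E)
    (hp : p ∉ M1.E ∪ M2.E) {C1 C2 : Set α} (hC1 : C1 ⊆ M1.E) (hC2 : C2 ⊆ M2.E) :
    ((C1 \ {p1}) ∪ (C2 \ {p2}) ∪ {p}) ∩ M2.E = C2 \ {p2} := by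
  have hd := Set.disjoint_left.mp hdisj
  ext x
  simp only [Set.mem_inter_iff, Set.mem_union, Set.mem_diff, Set.mem_singleton_iff]
  constructor
  · rintro ⟨(⟨h, _⟩ | ⟨h, hne⟩) | rfl, hx2⟩
    · exact absurd hx2 (fun h2 => hd (hC1 h) h2)
    · exact ⟨h, hne⟩
    · exact absurd (Or.inr hx2) hp
  · rintro ⟨h, hne⟩
    exact ⟨Or.inl (Or.inr ⟨h, hne⟩), hC2 h⟩

lemma insert1 {M1 M2 : Matroid α} {p1 p2 p : α} (hdisj : Disjoint M1.E M2.E)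
    (hp : p ∉ M1.E ∪ M2.E) {I : Set α} (hI : Indep M1 M2 p1 p2 p I) {e : α}
    (he1 : e ∈ M1.E) (hep1 : e ≠ p1)
    (hind : M1.Indep (insert e (I ∩ M1.E)))
    (hcond : p ∈ I → M1.Indep (insert e (I ∩ M1.E) ∪ {p1}) ∨ M2.Indep ((I ∩ M2.E) ∪ {p2})) :
    Indep M1 M2 p1 p2 p (insert e I) := by
  have he2 : e ∉ M2.E := fun h => Set.disjoint_left.mp hdisj he1 h
  have hi1 : insert e I ∩ M1.E = insert e (I ∩ M1.E) := Set.insert_inter_of_mem he1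
  have hi2 : insert e I ∩ M2.E = I ∩ M2.E := Set.insert_inter_of_notMem he2
  have hpe : p ≠ e := fun h => hp (Or.inl (h ▸ he1))
  refine ⟨?_, by rwa [hi1], by rw [hi2]; exact hI.2.2.1, fun hpmem => ?_⟩
  · rw [Set.insert_subset_iff]
    exact ⟨Or.inl (Or.inl ⟨he1, hep1⟩), hI.1⟩
  · have hpI : p ∈ I := by
      rcases Set.mem_insert_iff.mp hpmem with h | h
      exacts [absurd h hpe, h]
    rw [hi1, hi2]; exact hcond hpI

lemma insertp {M1 M2 : Matroid α} {p1 p2 p : α}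
    (hp : p ∉ M1.E ∪ M2.E) {I : Set α} (hI : Indep M1 M2 p1 p2 p I)
    (hcond : M1.Indep ((I ∩ M1.E) ∪ {p1}) ∨ M2.Indep ((I ∩ M2.E) ∪ {p2})) :
    Indep M1 M2 p1 p2 p (insert p I) := by
  have hp1 : p ∉ M1.E := fun h => hp (Or.inl h)
  have hp2 : p ∉ M2.E := fun h => hp (Or.inr h)
  have hi1 : insert p I ∩ M1.E = I ∩ M1.E := Set.insert_inter_of_notMem hp1
  have hi2 : insert p I ∩ M2.E = I ∩ M2.E := Set.insert_inter_of_notMem hp2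
  refine ⟨?_, by rw [hi1]; exact hI.2.1, by rw [hi2]; exact hI.2.2.1,
    fun _ => by rw [hi1, hi2]; exact hcond⟩
  rw [Set.insert_subset_iff]
  exact ⟨Or.inr rfl, hI.1⟩

lemma card_decomp {M1 M2 : Matroid α} {p1 p2 p : α}
    (h1 : M1.E.Finite) (h2 : M2.E.Finite) (hdisj : Disjoint M1.E M2.E)
    (hp : p ∉ M1.E ∪ M2.E) {I : Set α}
    (hs : I ⊆ (M1.E \ {p1}) ∪ (M2.E \ {p2}) ∪ {p}) :
    I.ncard = (I ∩ M1.E).ncard + (I ∩ M2.E).ncard + (I ∩ {p}).ncard := by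
  have hIfin : I.Finite :=
    (((h1.diff).union (h2.diff)).union (Set.finite_singleton p)).subset hs
  have hdec : I = (I ∩ M1.E) ∪ ((I ∩ M2.E) ∪ (I ∩ {p})) := by
    apply subset_antisymm
    · intro x hx
      rcases hs hx with (⟨h, _⟩ | ⟨h, _⟩) | h
      · exact Or.inl ⟨hx, h⟩
      · exact Or.inr (Or.inl ⟨hx, h⟩)
      · exact Or.inr (Or.inr ⟨hx, h⟩)
    · exact Set.union_subset Set.inter_subset_left
        (Set.union_subset Set.inter_subset_left Set.inter_subset_left)
  have hd1 : Disjoint (I ∩ M1.E) ((I ∩ M2.E) ∪ (I ∩ {p})) := by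
    apply Set.disjoint_union_right.mpr
    constructor
    · exact Set.disjoint_of_subset Set.inter_subset_right Set.inter_subset_right hdisj
    · refine Set.disjoint_left.mpr ?_
      rintro x ⟨_, hx1⟩ ⟨_, rfl⟩
      exact hp (Or.inl hx1)
  have hd2 : Disjoint (I ∩ M2.E) (I ∩ {p}) := by
    refine Set.disjoint_left.mpr ?_
    rintro x ⟨_, hx2⟩ ⟨_, rfl⟩
    exact hp (Or.inr hx2)
  have f1 : (I ∩ M1.E).Finite := hIfin.inter_of_left _
  have f2 : (I ∩ M2.E).Finite := hIfin.inter_of_left _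
  have f3 : (I ∩ {p}).Finite := hIfin.inter_of_left _
  conv_lhs => rw [hdec]
  rw [Set.ncard_union_eq hd1 f1 (f2.union f3), Set.ncard_union_eq hd2 f2 f3, add_assoc]

/-- finite augmentation in a single matroid, ncard version -/
lemma aug_tool {M : Matroid α} (hE : M.E.Finite) {A B : Set α}
    (hA : M.Indep A) (hB : M.Indep B) (h : A.ncard < B.ncard) :
    ∃ e ∈ B \ A, M.Indep (insert e A) := by
  apply hA.augment hB
  rw [← (hE.subset hA.subset_ground).cast_ncard_eq,
    ← (hE.subset hB.subset_ground).cast_ncard_eq]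
  exact_mod_cast h

lemma aug_main {M1 M2 : Matroid α} {p1 p2 p : α}
    (h1 : M1.E.Finite) (h2 : M2.E.Finite) (hdisj : Disjoint M1.E M2.E)
    (hp1 : p1 ∈ M1.E) (hp2 : p2 ∈ M2.E) (hp : p ∉ M1.E ∪ M2.E)
    {I J : Set α} (hI : Indep M1 M2 p1 p2 p I) (hJ : Indep M1 M2 p1 p2 p J)
    (hcard : I.ncard < J.ncard)
    (hside : p ∈ I → M1.Indep ((I ∩ M1.E) ∪ {p1})) :
    ∃ e ∈ J, e ∉ I ∧ Indep M1 M2 p1 p2 p (insert e I) := by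
  have hpE1 : p ∉ M1.E := fun h => hp (Or.inl h)
  have hpE2 : p ∉ M2.E := fun h => hp (Or.inr h)
  have hp' : p ∉ M2.E ∪ M1.E := fun h => by rcases h with h | h; exacts [hpE2 h, hpE1 h]
  have hp1E2 : p1 ∉ M2.E := fun h => Set.disjoint_left.mp hdisj hp1 h
  have hp2E1 : p2 ∉ M1.E := fun h => Set.disjoint_left.mp hdisj h hp2
  have hp1J : p1 ∉ J := fun h => by
    rcases hJ.1 h with (⟨_, hne⟩ | ⟨hm, _⟩) | hm
    exacts [hne rfl, hp1E2 hm, hpE1 ((Set.eq_of_mem_singleton hm) ▸ hp1)]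
  have hp2J : p2 ∉ J := fun h => by
    rcases hJ.1 h with (⟨hm, _⟩ | ⟨_, hne⟩) | hm
    exacts [hp2E1 hm, hne rfl, hpE2 ((Set.eq_of_mem_singleton hm) ▸ hp2)]
  have hp1I : p1 ∉ I := fun h => by
    rcases hI.1 h with (⟨_, hne⟩ | ⟨hm, _⟩) | hm
    exacts [hne rfl, hp1E2 hm, hpE1 ((Set.eq_of_mem_singleton hm) ▸ hp1)]
  have finI1 : (I ∩ M1.E).Finite := h1.inter_of_right I
  have finI2 : (I ∩ M2.E).Finite := h2.inter_of_right I
  have finJ1 : (J ∩ M1.E).Finite := h1.inter_of_right J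
  have finJ2 : (J ∩ M2.E).Finite := h2.inter_of_right J
  have cI := card_decomp h1 h2 hdisj hp hI.1
  have cJ := card_decomp h1 h2 hdisj hp hJ.1
  have hJp_le : (J ∩ {p}).ncard ≤ 1 := by
    have := Set.ncard_le_ncard (Set.inter_subset_right (s := J) (t := {p}))
      (Set.finite_singleton p)
    simpa using this
  have hIp_le : (I ∩ {p}).ncard ≤ 1 := by
    have := Set.ncard_le_ncard (Set.inter_subset_right (s := I) (t := {p}))
      (Set.finite_singleton p)
    simpa using this
  have finish2 : ∀ f, f ∈ J ∩ M2.E → f ∉ I ∩ M2.E → M2.Indep (insert f (I ∩ M2.E)) →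
      ∃ e ∈ J, e ∉ I ∧ Indep M1 M2 p1 p2 p (insert e I) := by
    intro f hf hfI hind
    refine ⟨f, hf.1, fun hfmem => hfI ⟨hfmem, hf.2⟩, ?_⟩
    have hres := insert1 (M1 := M2) (M2 := M1) hdisj.symm hp' (indep_symm hI) hf.2
      (fun hfeq => hp2J (hfeq ▸ hf.1)) hind (fun hpI => Or.inr (hside hpI))
    exact indep_symm hres
  by_cases hc2 : (I ∩ M2.E).ncard < (J ∩ M2.E).ncard
  · obtain ⟨f, hf, hind⟩ := aug_tool h2 hI.2.2.1 hJ.2.2.1 hc2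
    exact finish2 f hf.1 hf.2 hind
  push_neg at hc2
  obtain ⟨A, hAind, hIA, hAsub, hAcard, hAfull, hAnfull⟩ :
      ∃ A, M1.Indep A ∧ I ∩ M1.E ⊆ A ∧ A ⊆ insert p1 (I ∩ M1.E) ∧
        A.ncard = (I ∩ M1.E).ncard + (I ∩ {p}).ncard ∧
        (p ∈ I → A = insert p1 (I ∩ M1.E)) ∧ (p ∉ I → A = I ∩ M1.E) := by
    by_cases hpI : p ∈ I
    · refine ⟨insert p1 (I ∩ M1.E), ?_, Set.subset_insert _ _, subset_rfl, ?_,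
        fun _ => rfl, fun h => absurd hpI h⟩
      · rw [← Set.union_singleton]; exact hside hpI
      · rw [Set.ncard_insert_of_notMem (fun h => hp1I h.1) finI1,
          Set.inter_eq_right.mpr (Set.singleton_subset_iff.mpr hpI), Set.ncard_singleton]
    · refine ⟨I ∩ M1.E, hI.2.1, subset_rfl, Set.subset_insert _ _, ?_,
        fun h => absurd h hpI, fun _ => rfl⟩
      rw [Set.inter_singleton_eq_empty.mpr hpI, Set.ncard_empty, add_zero]
  have finA : A.Finite := (finI1.insert p1).subset hAsub
  have finish1 : ∀ e, e ∈ J ∩ M1.E → e ∉ A → M1.Indep (insert e A) →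
      ∃ e ∈ J, e ∉ I ∧ Indep M1 M2 p1 p2 p (insert e I) := by
    intro e he heA hind
    refine ⟨e, he.1, fun hmem => heA (hIA ⟨hmem, he.2⟩), ?_⟩
    refine insert1 hdisj hp hI he.2 (fun heq => hp1J (heq ▸ he.1)) ?_ ?_
    · exact hind.subset (Set.insert_subset_insert hIA)
    · intro hpI
      left
      rw [Set.union_singleton]
      have heq : insert p1 (insert e (I ∩ M1.E)) = insert e A := by
        rw [hAfull hpI, Set.insert_comm]
      rw [heq]
      exact hind
  by_cases hc1 : A.ncard < (J ∩ M1.E).ncard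
  · obtain ⟨e, he, hind⟩ := aug_tool h1 hAind hJ.2.1 hc1
    exact finish1 e he.1 he.2 hind
  push_neg at hc1
  have hJ1A : (J ∩ M1.E).ncard = A.ncard := by omega
  have hJ2I2 : (J ∩ M2.E).ncard = (I ∩ M2.E).ncard := by omega
  have hJp1 : (J ∩ {p}).ncard = 1 := by omega
  have hpJ : p ∈ J := by
    by_contra h
    rw [Set.inter_singleton_eq_empty.mpr h, Set.ncard_empty] at hJp1
    exact absurd hJp1 (by norm_num)
  rcases hJ.2.2.2 hpJ with hJs1 | hJs2
  · have hJ1ins : M1.Indep (insert p1 (J ∩ M1.E)) := by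
      rw [← Set.union_singleton]; exact hJs1
    have hlt : A.ncard < (insert p1 (J ∩ M1.E)).ncard := by
      rw [Set.ncard_insert_of_notMem (fun h => hp1J h.1) finJ1]; omega
    obtain ⟨e, he, hind⟩ := aug_tool h1 hAind hJ1ins hlt
    rcases Set.mem_insert_iff.mp he.1 with heq | heJ1
    · have hpI : p ∉ I := fun h => he.2 (by rw [hAfull h, heq]; exact Set.mem_insert _ _)
      refine ⟨p, hpJ, hpI, ?_⟩
      refine insertp hp hI (Or.inl ?_)
      rw [Set.union_singleton, ← hAnfull hpI, ← heq]
      exact hind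
    · exact finish1 e heJ1 he.2 hind
  · have hJ2ins : M2.Indep (insert p2 (J ∩ M2.E)) := by
      rw [← Set.union_singleton]; exact hJs2
    have hlt2 : (I ∩ M2.E).ncard < (insert p2 (J ∩ M2.E)).ncard := by
      rw [Set.ncard_insert_of_notMem (fun h => hp2J h.1) finJ2]; omega
    obtain ⟨f, hf, hind2⟩ := aug_tool h2 hI.2.2.1 hJ2ins hlt2
    rcases Set.mem_insert_iff.mp hf.1 with heq | hfJ2
    · have hI2p2 : M2.Indep ((I ∩ M2.E) ∪ {p2}) := by
        rw [Set.union_singleton, ← heq]; exact hind2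
      by_cases hpI : p ∈ I
      · have hip1 : (I ∩ {p}).ncard = 1 := by
          rw [Set.inter_eq_right.mpr (Set.singleton_subset_iff.mpr hpI), Set.ncard_singleton]
        have hlt1 : (I ∩ M1.E).ncard < (J ∩ M1.E).ncard := by omega
        obtain ⟨e, he, hinde⟩ := aug_tool h1 hI.2.1 hJ.2.1 hlt1
        refine ⟨e, he.1.1, fun hmem => he.2 ⟨hmem, he.1.2⟩, ?_⟩
        exact insert1 hdisj hp hI he.1.2 (fun heq => hp1J (heq ▸ he.1.1)) hinde
          (fun _ => Or.inr hI2p2)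
      · exact ⟨p, hpJ, hpI, insertp hp hI (Or.inr hI2p2)⟩
    · exact finish2 f hfJ2 hf.2 hind2

lemma circ_forward {M1 M2 : Matroid α} {p1 p2 p : α} {N : Matroid α}
    (h1 : M1.E.Finite) (h2 : M2.E.Finite) (hdisj : Disjoint M1.E M2.E)
    (hp1 : p1 ∈ M1.E) (hp2 : p2 ∈ M2.E) (hp : p ∉ M1.E ∪ M2.E)
    (hNE : N.E = (M1.E \ {p1}) ∪ (M2.E \ {p2}) ∪ {p})
    (hNind : ∀ I, N.Indep I ↔ Indep M1 M2 p1 p2 p I)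
    {C : Set α} (hC : N.Circuit' C) :
    (M1.Circuit' C ∧ p1 ∉ C) ∨ (M2.Circuit' C ∧ p2 ∉ C) ∨
      ∃ C1 C2 : Set α, M1.Circuit' C1 ∧ p1 ∈ C1 ∧ M2.Circuit' C2 ∧ p2 ∈ C2 ∧
        C = (C1 \ {p1}) ∪ (C2 \ {p2}) ∪ {p} := by
  have hpE1 : p ∉ M1.E := fun h => hp (Or.inl h)
  have hpE2 : p ∉ M2.E := fun h => hp (Or.inr h)
  have hp1E2 : p1 ∉ M2.E := fun h => Set.disjoint_left.mp hdisj hp1 h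
  have hp2E1 : p2 ∉ M1.E := fun h => Set.disjoint_left.mp hdisj h hp2
  obtain ⟨hdep, hmin⟩ := circuit'_iff.mp hC
  have hCE : C ⊆ (M1.E \ {p1}) ∪ (M2.E \ {p2}) ∪ {p} := hNE ▸ hdep.subset_ground
  have hCnotind : ¬ Indep M1 M2 p1 p2 p C :=
    fun h => (Matroid.dep_iff.mp hdep).1 ((hNind C).mpr h)
  have hminI : ∀ D, D ⊂ C → Indep M1 M2 p1 p2 p D := fun D hD => (hNind D).mp (hmin D hD)
  have hp1C : p1 ∉ C := fun h => by
    rcases hCE h with (⟨_, hne⟩ | ⟨hm, _⟩) | hm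
    exacts [hne rfl, hp1E2 hm, hpE1 ((Set.eq_of_mem_singleton hm) ▸ hp1)]
  have hp2C : p2 ∉ C := fun h => by
    rcases hCE h with (⟨hm, _⟩ | ⟨_, hne⟩) | hm
    exacts [hp2E1 hm, hne rfl, hpE2 ((Set.eq_of_mem_singleton hm) ▸ hp2)]
  by_cases hpC : p ∈ C
  · -- p ∈ C : type 3 circuit
    have hC1 : M1.Indep (C ∩ M1.E) := by
      by_contra hnd
      have hss : C \ {p} ⊂ C := Set.sdiff_singleton_ssubset.mpr hpC
      have hii := (hminI _ hss).2.1
      have heq : (C \ {p}) ∩ M1.E = C ∩ M1.E := by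
        ext x
        simp only [Set.mem_inter_iff, Set.mem_diff, Set.mem_singleton_iff]
        constructor
        · rintro ⟨⟨hxC, _⟩, hx1⟩; exact ⟨hxC, hx1⟩
        · rintro ⟨hxC, hx1⟩; exact ⟨⟨hxC, fun hq => hpE1 (hq ▸ hx1)⟩, hx1⟩
      rw [heq] at hii
      exact hnd hii
    have hC2 : M2.Indep (C ∩ M2.E) := by
      by_contra hnd
      have hss : C \ {p} ⊂ C := Set.sdiff_singleton_ssubset.mpr hpC
      have hii := (hminI _ hss).2.2.1
      have heq : (C \ {p}) ∩ M2.E = C ∩ M2.E := by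
        ext x
        simp only [Set.mem_inter_iff, Set.mem_diff, Set.mem_singleton_iff]
        constructor
        · rintro ⟨⟨hxC, _⟩, hx2⟩; exact ⟨hxC, hx2⟩
        · rintro ⟨hxC, hx2⟩; exact ⟨⟨hxC, fun hq => hpE2 (hq ▸ hx2)⟩, hx2⟩
      rw [heq] at hii
      exact hnd hii
    have hcond : ¬ (M1.Indep ((C ∩ M1.E) ∪ {p1}) ∨ M2.Indep ((C ∩ M2.E) ∪ {p2})) :=
      fun h => hCnotind ⟨hCE, hC1, hC2, fun _ => h⟩
    push_neg at hcond
    obtain ⟨hn1, hn2⟩ := hcond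
    have hd1 : M1.Dep ((C ∩ M1.E) ∪ {p1}) :=
      ⟨hn1, Set.union_subset Set.inter_subset_right (Set.singleton_subset_iff.mpr hp1)⟩
    have hd2 : M2.Dep ((C ∩ M2.E) ∪ {p2}) :=
      ⟨hn2, Set.union_subset Set.inter_subset_right (Set.singleton_subset_iff.mpr hp2)⟩
    obtain ⟨C1', hC1'sub, hC1'⟩ := exists_circuit'_subset
      ((h1.inter_of_right C).union (Set.finite_singleton p1)) hd1
    obtain ⟨C2', hC2'sub, hC2'⟩ := exists_circuit'_subset
      ((h2.inter_of_right C).union (Set.finite_singleton p2)) hd2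
    have hp1C1' : p1 ∈ C1' := by
      by_contra hcon
      have hsub : C1' ⊆ C ∩ M1.E := fun x hx => by
        rcases hC1'sub hx with h | h
        · exact h
        · exact absurd ((Set.eq_of_mem_singleton h) ▸ hx) hcon
      exact (Matroid.dep_iff.mp hC1'.1).1 (hC1.subset hsub)
    have hp2C2' : p2 ∈ C2' := by
      by_contra hcon
      have hsub : C2' ⊆ C ∩ M2.E := fun x hx => by
        rcases hC2'sub hx with h | h
        · exact h
        · exact absurd ((Set.eq_of_mem_singleton h) ▸ hx) hcon
      exact (Matroid.dep_iff.mp hC2'.1).1 (hC2.subset hsub)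
    have hC1's : C1' ⊆ M1.E := hC1'sub.trans
      (Set.union_subset Set.inter_subset_right (Set.singleton_subset_iff.mpr hp1))
    have hC2's : C2' ⊆ M2.E := hC2'sub.trans
      (Set.union_subset Set.inter_subset_right (Set.singleton_subset_iff.mpr hp2))
    have hDsub : (C1' \ {p1}) ∪ (C2' \ {p2}) ∪ {p} ⊆ C := by
      refine Set.union_subset (Set.union_subset ?_ ?_) (Set.singleton_subset_iff.mpr hpC)
      · rintro x ⟨hx, hne⟩
        rcases hC1'sub hx with h | h
        · exact h.1
        · exact absurd (Set.eq_of_mem_singleton h) hne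
      · rintro x ⟨hx, hne⟩
        rcases hC2'sub hx with h | h
        · exact h.1
        · exact absurd (Set.eq_of_mem_singleton h) hne
    have hDnotind : ¬ Indep M1 M2 p1 p2 p ((C1' \ {p1}) ∪ (C2' \ {p2}) ∪ {p}) := by
      intro hD
      have hi1 := inter1 (p1 := p1) (p2 := p2) hdisj hp hC1's hC2's
      have hi2 := inter2 (p1 := p1) (p2 := p2) hdisj hp hC1's hC2's
      rcases hD.2.2.2 (Or.inr rfl) with h | h
      · rw [hi1] at h
        rw [Set.diff_union_of_subset (Set.singleton_subset_iff.mpr hp1C1')] at h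
        exact (Matroid.dep_iff.mp hC1'.1).1 h
      · rw [hi2] at h
        rw [Set.diff_union_of_subset (Set.singleton_subset_iff.mpr hp2C2')] at h
        exact (Matroid.dep_iff.mp hC2'.1).1 h
    have hDC : (C1' \ {p1}) ∪ (C2' \ {p2}) ∪ {p} = C := by
      by_contra hne
      exact hDnotind (hminI _ (Set.ssubset_iff_subset_ne.mpr ⟨hDsub, hne⟩))
    exact Or.inr (Or.inr ⟨C1', C2', hC1', hp1C1', hC2', hp2C2', hDC.symm⟩)
  · -- p ∉ C : circuit of M1 or M2
    have hnand : ¬ (M1.Indep (C ∩ M1.E) ∧ M2.Indep (C ∩ M2.E)) := by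
      intro ⟨ha, hb⟩
      exact hCnotind ⟨hCE, ha, hb, fun h => absurd h hpC⟩
    rcases not_and_or.mp hnand with hnd | hnd
    · left
      have hCeq : C ∩ M1.E = C := by
        by_contra hne
        have hii := (hminI _ (Set.ssubset_iff_subset_ne.mpr ⟨Set.inter_subset_left, hne⟩)).2.1
        rw [Set.inter_assoc, Set.inter_self] at hii
        exact hnd hii
      have hCs : C ⊆ M1.E := Set.inter_eq_left.mp hCeq
      refine ⟨circuit'_iff.mpr ⟨⟨by rwa [hCeq] at hnd, hCs⟩, fun D hD => ?_⟩, hp1C⟩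
      have hii := (hminI D hD).2.1
      rwa [Set.inter_eq_left.mpr (hD.subset.trans hCs)] at hii
    · right; left
      have hCeq : C ∩ M2.E = C := by
        by_contra hne
        have hii := (hminI _ (Set.ssubset_iff_subset_ne.mpr ⟨Set.inter_subset_left, hne⟩)).2.2.1
        rw [Set.inter_assoc, Set.inter_self] at hii
        exact hnd hii
      have hCs : C ⊆ M2.E := Set.inter_eq_left.mp hCeq
      refine ⟨circuit'_iff.mpr ⟨⟨by rwa [hCeq] at hnd, hCs⟩, fun D hD => ?_⟩, hp2C⟩
      have hii := (hminI D hD).2.2.1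
      rwa [Set.inter_eq_left.mpr (hD.subset.trans hCs)] at hii

lemma circ_back1 {M1 M2 : Matroid α} {p1 p2 p : α} {N : Matroid α}
    (hdisj : Disjoint M1.E M2.E) (hp : p ∉ M1.E ∪ M2.E)
    (hNE : N.E = (M1.E \ {p1}) ∪ (M2.E \ {p2}) ∪ {p})
    (hNind : ∀ I, N.Indep I ↔ Indep M1 M2 p1 p2 p I)
    {C : Set α} (hC : M1.Circuit' C) (hp1C : p1 ∉ C) : N.Circuit' C := by
  have hpE1 : p ∉ M1.E := fun h => hp (Or.inl h)
  obtain ⟨hdep, hminM⟩ := circuit'_iff.mp hC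
  have hCs : C ⊆ M1.E := hdep.subset_ground
  have hCE : C ⊆ (M1.E \ {p1}) ∪ (M2.E \ {p2}) ∪ {p} :=
    fun x hx => Or.inl (Or.inl ⟨hCs hx, fun heq => hp1C ((Set.eq_of_mem_singleton heq) ▸ hx)⟩)
  rw [circuit'_iff]
  constructor
  · rw [Matroid.dep_iff, hNE]
    refine ⟨fun h => ?_, hCE⟩
    have hii := ((hNind C).mp h).2.1
    rw [Set.inter_eq_left.mpr hCs] at hii
    exact (Matroid.dep_iff.mp hdep).1 hii
  · intro D hD
    apply (hNind D).mpr
    refine ⟨hD.subset.trans hCE, ?_, ?_, fun hpD => ?_⟩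
    · rw [Set.inter_eq_left.mpr (hD.subset.trans hCs)]
      exact hminM D hD
    · rw [Set.disjoint_iff_inter_eq_empty.mp (hdisj.mono_left (hD.subset.trans hCs))]
      exact M2.empty_indep
    · exact absurd (hCs (hD.subset hpD)) hpE1

lemma circ_back3 {M1 M2 : Matroid α} {p1 p2 p : α} {N : Matroid α}
    (hdisj : Disjoint M1.E M2.E)
    (hp1 : p1 ∈ M1.E) (hp2 : p2 ∈ M2.E) (hp : p ∉ M1.E ∪ M2.E)
    (hNE : N.E = (M1.E \ {p1}) ∪ (M2.E \ {p2}) ∪ {p})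
    (hNind : ∀ I, N.Indep I ↔ Indep M1 M2 p1 p2 p I)
    {C1 C2 : Set α} (hC1 : M1.Circuit' C1) (hp1C1 : p1 ∈ C1)
    (hC2 : M2.Circuit' C2) (hp2C2 : p2 ∈ C2) :
    N.Circuit' ((C1 \ {p1}) ∪ (C2 \ {p2}) ∪ {p}) := by
  obtain ⟨hdep1, hminM1⟩ := circuit'_iff.mp hC1
  obtain ⟨hdep2, hminM2⟩ := circuit'_iff.mp hC2
  have hC1s : C1 ⊆ M1.E := hdep1.subset_ground
  have hC2s : C2 ⊆ M2.E := hdep2.subset_ground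
  have hi1 := inter1 (p1 := p1) (p2 := p2) hdisj hp hC1s hC2s
  have hi2 := inter2 (p1 := p1) (p2 := p2) hdisj hp hC1s hC2s
  have hCE : (C1 \ {p1}) ∪ (C2 \ {p2}) ∪ {p} ⊆ (M1.E \ {p1}) ∪ (M2.E \ {p2}) ∪ {p} := by
    exact Set.union_subset_union (Set.union_subset_union
      (Set.diff_subset_diff_left hC1s) (Set.diff_subset_diff_left hC2s)) subset_rfl
  have hss1 : C1 \ {p1} ⊂ C1 := Set.sdiff_singleton_ssubset.mpr hp1C1
  have hss2 : C2 \ {p2} ⊂ C2 := Set.sdiff_singleton_ssubset.mpr hp2C2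
  rw [circuit'_iff]
  constructor
  · rw [Matroid.dep_iff, hNE]
    refine ⟨fun h => ?_, hCE⟩
    rcases ((hNind _).mp h).2.2.2 (Or.inr rfl) with hcon | hcon
    · rw [hi1, Set.diff_union_of_subset (Set.singleton_subset_iff.mpr hp1C1)] at hcon
      exact (Matroid.dep_iff.mp hdep1).1 hcon
    · rw [hi2, Set.diff_union_of_subset (Set.singleton_subset_iff.mpr hp2C2)] at hcon
      exact (Matroid.dep_iff.mp hdep2).1 hcon
  · intro D hD
    obtain ⟨x, hxC, hxD⟩ := Set.exists_of_ssubset hD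
    have hDi1 : D ∩ M1.E ⊆ C1 \ {p1} := hi1 ▸ Set.inter_subset_inter_left _ hD.subset
    have hDi2 : D ∩ M2.E ⊆ C2 \ {p2} := hi2 ▸ Set.inter_subset_inter_left _ hD.subset
    apply (hNind D).mpr
    refine ⟨hD.subset.trans hCE, (hminM1 _ hss1).subset hDi1,
      (hminM2 _ hss2).subset hDi2, fun hpD => ?_⟩
    rcases hxC with (hx1 | hx2) | hxp
    · left
      refine hminM1 _ (Set.ssubset_iff_subset_ne.mpr ⟨?_, ?_⟩)
      · exact Set.union_subset (hDi1.trans Set.diff_subset)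
          (Set.singleton_subset_iff.mpr hp1C1)
      · intro heq
        have hx : x ∈ D ∩ M1.E ∪ {p1} := heq.symm ▸ hx1.1
        rcases hx with hx | hx
        · exact hxD hx.1
        · exact hx1.2 hx
    · right
      refine hminM2 _ (Set.ssubset_iff_subset_ne.mpr ⟨?_, ?_⟩)
      · exact Set.union_subset (hDi2.trans Set.diff_subset)
          (Set.singleton_subset_iff.mpr hp2C2)
      · intro heq
        have hx : x ∈ D ∩ M2.E ∪ {p2} := heq.symm ▸ hx2.1
        rcases hx with hx | hx
        · exact hxD hx.1
        · exact hx2.2 hx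
    · exact absurd ((Set.eq_of_mem_singleton hxp) ▸ hpD) hxD

end SC

/-- The series connection: given matroids `M1`, `M2` on disjoint finite ground sets,
non-loop elements `p1 ∈ M1.E`, `p2 ∈ M2.E`, and a fresh element `p`, there is a matroid
on `(M1.E \ {p1}) ∪ (M2.E \ {p2}) ∪ {p}` whose circuits are exactly: the circuits of `M1`
avoiding `p1`, the circuits of `M2` avoiding `p2`, and the sets
`(C1 \ {p1}) ∪ (C2 \ {p2}) ∪ {p}` for circuits `Ci` of `Mi` containing `pi`. -/
theorem seriesConnection_exists {α : Type*} (M1 M2 : Matroid α)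
    (h1 : M1.E.Finite) (h2 : M2.E.Finite) (hdisj : Disjoint M1.E M2.E)
    (p1 p2 p : α) (hp1 : p1 ∈ M1.E) (hp2 : p2 ∈ M2.E)
    (hl1 : M1.Indep {p1}) (hl2 : M2.Indep {p2})
    (hp : p ∉ M1.E ∪ M2.E) :
    ∃ N : Matroid α, N.E = (M1.E \ {p1}) ∪ (M2.E \ {p2}) ∪ {p} ∧
      ∀ C : Set α, N.Circuit' C ↔
        ((M1.Circuit' C ∧ p1 ∉ C) ∨ (M2.Circuit' C ∧ p2 ∉ C) ∨
          ∃ C1 C2 : Set α, M1.Circuit' C1 ∧ p1 ∈ C1 ∧ M2.Circuit' C2 ∧ p2 ∈ C2 ∧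
            C = (C1 \ {p1}) ∪ (C2 \ {p2}) ∪ {p}) := by
  have hp' : p ∉ M2.E ∪ M1.E := fun h => by
    rcases h with h | h
    exacts [hp (Or.inr h), hp (Or.inl h)]
  have hEfin : ((M1.E \ {p1}) ∪ (M2.E \ {p2}) ∪ {p}).Finite :=
    ((h1.diff).union (h2.diff)).union (Set.finite_singleton p)
  have hempty : SC.Indep M1 M2 p1 p2 p ∅ :=
    ⟨Set.empty_subset _, by rw [Set.empty_inter]; exact M1.empty_indep,
      by rw [Set.empty_inter]; exact M2.empty_indep,
      fun h => absurd h (Set.notMem_empty p)⟩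
  have haug : ∀ ⦃I J : Set α⦄, SC.Indep M1 M2 p1 p2 p I → SC.Indep M1 M2 p1 p2 p J →
      I.ncard < J.ncard → ∃ e ∈ J, e ∉ I ∧ SC.Indep M1 M2 p1 p2 p (insert e I) := by
    intro I J hI hJ hc
    by_cases hpI : p ∈ I
    · rcases hI.2.2.2 hpI with h | h
      · exact SC.aug_main h1 h2 hdisj hp1 hp2 hp hI hJ hc (fun _ => h)
      · obtain ⟨e, heJ, heI, hins⟩ := SC.aug_main h2 h1 hdisj.symm hp2 hp1 hp'
          (SC.indep_symm hI) (SC.indep_symm hJ) hc (fun _ => h)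
        exact ⟨e, heJ, heI, SC.indep_symm hins⟩
    · exact SC.aug_main h1 h2 hdisj hp1 hp2 hp hI hJ hc (fun h => absurd h hpI)
  set N := (IndepMatroid.ofFinite hEfin (SC.Indep M1 M2 p1 p2 p) hempty
    (fun I J hJ hIJ => SC.indep_subset hJ hIJ) haug (fun I hI => hI.1)).matroid with hNdef
  have hNE : N.E = (M1.E \ {p1}) ∪ (M2.E \ {p2}) ∪ {p} := rfl
  have hNind : ∀ I, N.Indep I ↔ SC.Indep M1 M2 p1 p2 p I := by
    intro I
    rw [hNdef, IndepMatroid.matroid_indep_iff, IndepMatroid.ofFinite_indep]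
  have hNE' : N.E = (M2.E \ {p2}) ∪ (M1.E \ {p1}) ∪ {p} :=
    hNE.trans (SC.ground_comm M1 M2 p1 p2 p).symm
  have hNind' : ∀ I, N.Indep I ↔ SC.Indep M2 M1 p2 p1 p I :=
    fun I => (hNind I).trans ⟨SC.indep_symm, SC.indep_symm⟩
  refine ⟨N, hNE, fun C => ⟨fun hC => ?_, fun hC => ?_⟩⟩
  · exact SC.circ_forward h1 h2 hdisj hp1 hp2 hp hNE hNind hC
  · rcases hC with ⟨hC, hp1C⟩ | ⟨hC, hp2C⟩ | ⟨C1, C2, hC1, hp1C1, hC2, hp2C2, rfl⟩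
    · exact SC.circ_back1 hdisj hp hNE hNind hC hp1C
    · exact SC.circ_back1 hdisj.symm hp' hNE' hNind' hC hp2C
    · exact SC.circ_back3 hdisj hp1 hp2 hp hNE hNind hC1 hp1C1 hC2 hp2C2
end

section
/- Let M1 and M2 be matroids on disjoint finite ground sets S1 and S2, let p1 ∈ S1 and p2 ∈ S2 be elements that are not loops, and let p be an element not in S1 ∪ S2. Set E = (S1 \ {p1}) ∪ (S2 \ {p2}) ∪ {p}. Define C_P to be the collection of subsets of E consisting of: all circuits of M1 not containing p1, all circuits of M2 not containing p2, all sets (C1 \ {p1}) ∪ {p} where C1 is a circuit of M1 containing p1, all sets (C2 \ {p2}) ∪ {p} where C2 is a circuit of M2 containing p2, and all sets (C1 \ {p1}) ∪ (C2 \ {p2}) where C1 is a circuit of M1 containing p1 and C2 is a circuit of M2 containing p2. Then there exists a matroid on E whose circuits are exactly the members of C_P (the parallel connection of M1 and M2). -/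
open Set

set_option linter.unusedSectionVars false
set_option linter.unusedVariables false

namespace ParallelAux

variable {α : Type*}

/-- Ground set of the parallel connection. -/
def E' (M1 M2 : Matroid α) (p1 p2 p : α) : Set α :=
  (M1.E \ {p1}) ∪ (M2.E \ {p2}) ∪ {p}

/-- Independence predicate for the parallel connection. -/
def PIndep (M1 M2 : Matroid α) (p1 p2 p : α) (I : Set α) : Prop :=
  I ⊆ E' M1 M2 p1 p2 p ∧ M1.Indep (I ∩ M1.E) ∧ M2.Indep (I ∩ M2.E) ∧
  (p ∈ I → M1.Indep (insert p1 (I ∩ M1.E)) ∧ M2.Indep (insert p2 (I ∩ M2.E))) ∧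
  (p ∉ I → M1.Indep (insert p1 (I ∩ M1.E)) ∨ M2.Indep (insert p2 (I ∩ M2.E)))

/-- Circuit description of the parallel connection. -/
def Listed (M1 M2 : Matroid α) (p1 p2 p : α) (C : Set α) : Prop :=
  (M1.Circuit' C ∧ p1 ∉ C) ∨ (M2.Circuit' C ∧ p2 ∉ C) ∨
  (∃ C1 : Set α, M1.Circuit' C1 ∧ p1 ∈ C1 ∧ C = (C1 \ {p1}) ∪ {p}) ∨
  (∃ C2 : Set α, M2.Circuit' C2 ∧ p2 ∈ C2 ∧ C = (C2 \ {p2}) ∪ {p}) ∨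
  ∃ C1 C2 : Set α, M1.Circuit' C1 ∧ p1 ∈ C1 ∧ M2.Circuit' C2 ∧ p2 ∈ C2 ∧
    C = (C1 \ {p1}) ∪ (C2 \ {p2})

lemma E'_comm (M1 M2 : Matroid α) (p1 p2 p : α) :
    E' M1 M2 p1 p2 p = E' M2 M1 p2 p1 p := by
  unfold E'; rw [union_comm (M1.E \ {p1})]

lemma pIndep_comm {M1 M2 : Matroid α} {p1 p2 p : α} {I : Set α} :
    PIndep M1 M2 p1 p2 p I ↔ PIndep M2 M1 p2 p1 p I := by
  unfold PIndep; rw [E'_comm]; tauto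

lemma listed_comm {M1 M2 : Matroid α} {p1 p2 p : α} {C : Set α} :
    Listed M1 M2 p1 p2 p C ↔ Listed M2 M1 p2 p1 p C := by
  constructor <;>
  · rintro (h | h | ⟨C1, hC1, hp1, rfl⟩ | ⟨C2, hC2, hp2, rfl⟩ | ⟨C1, C2, hC1, hpC1, hC2, hpC2, rfl⟩)
    · exact Or.inr (Or.inl h)
    · exact Or.inl h
    · exact Or.inr (Or.inr (Or.inr (Or.inl ⟨C1, hC1, hp1, rfl⟩)))
    · exact Or.inr (Or.inr (Or.inl ⟨C2, hC2, hp2, rfl⟩))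
    · exact Or.inr (Or.inr (Or.inr (Or.inr ⟨C2, C1, hC2, hpC2, hC1, hpC1, union_comm _ _⟩)))

variable {M1 M2 : Matroid α} {p1 p2 p : α}

lemma pIndep_sub {I : Set α} (h : PIndep M1 M2 p1 p2 p I) : I ⊆ E' M1 M2 p1 p2 p := h.1
lemma pIndep_i1 {I : Set α} (h : PIndep M1 M2 p1 p2 p I) : M1.Indep (I ∩ M1.E) := h.2.1
lemma pIndep_i2 {I : Set α} (h : PIndep M1 M2 p1 p2 p I) : M2.Indep (I ∩ M2.E) := h.2.2.1
lemma pIndep_imp1 {I : Set α} (h : PIndep M1 M2 p1 p2 p I) : p ∈ I →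
    M1.Indep (insert p1 (I ∩ M1.E)) ∧ M2.Indep (insert p2 (I ∩ M2.E)) := h.2.2.2.1
lemma pIndep_imp2 {I : Set α} (h : PIndep M1 M2 p1 p2 p I) : p ∉ I →
    M1.Indep (insert p1 (I ∩ M1.E)) ∨ M2.Indep (insert p2 (I ∩ M2.E)) := h.2.2.2.2

section Basic
variable (hdisj : Disjoint M1.E M2.E) (hp : p ∉ M1.E ∪ M2.E)
include hdisj hp

lemma mem_side1 {x : α} (hx : x ∈ E' M1 M2 p1 p2 p) (hx1 : x ∈ M1.E) :
    x ≠ p1 ∧ x ∉ M2.E ∧ x ≠ p := by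
  have h2 : x ∉ M2.E := fun h => hdisj.ne_of_mem hx1 h rfl
  have hxp : x ≠ p := by rintro rfl; exact hp (Or.inl hx1)
  rcases hx with (h | h) | h
  · exact ⟨h.2, h2, hxp⟩
  · exact absurd h.1 h2
  · exact absurd h hxp

lemma p1_not_mem {I : Set α} (hI : I ⊆ E' M1 M2 p1 p2 p) (hp1 : p1 ∈ M1.E) : p1 ∉ I :=
  fun h => (mem_side1 hdisj hp (hI h) hp1).1 rfl

lemma insert_inter1 {I : Set α} {e : α} (he : e ∈ M1.E) :
    (insert e I) ∩ M1.E = insert e (I ∩ M1.E) ∧ (insert e I) ∩ M2.E = I ∩ M2.E := by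
  constructor
  · rw [insert_inter_of_mem he]
  · rw [insert_inter_of_notMem (fun h => hdisj.ne_of_mem he h rfl)]

lemma insert_p_inter {I : Set α} :
    (insert p I) ∩ M1.E = I ∩ M1.E ∧ (insert p I) ∩ M2.E = I ∩ M2.E :=
  ⟨insert_inter_of_notMem (fun h => hp (Or.inl h)),
   insert_inter_of_notMem (fun h => hp (Or.inr h))⟩

lemma build1strong {I : Set α} {e : α} (hI : PIndep M1 M2 p1 p2 p I)
    (he : e ∈ M1.E) (heE : e ∈ E' M1 M2 p1 p2 p)
    (hind : M1.Indep (insert p1 (insert e (I ∩ M1.E)))) :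
    PIndep M1 M2 p1 p2 p (insert e I) := by
  obtain ⟨hsub, hi1, hi2, himp1, himp2⟩ := hI
  obtain ⟨h1, h2⟩ := insert_inter1 hdisj hp (I := I) he
  have hep : e ≠ p := (mem_side1 hdisj hp heE he).2.2
  have hpmem : p ∈ insert e I ↔ p ∈ I := by
    simp only [mem_insert_iff]
    constructor
    · rintro (rfl | h); · exact absurd rfl hep.symm
      exact h
    · exact Or.inr
  refine ⟨insert_subset heE hsub, ?_, ?_, ?_, ?_⟩
  · rw [h1]; exact hind.subset (subset_insert _ _)
  · rw [h2]; exact hi2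
  · intro hpI
    rw [h1, h2]
    exact ⟨hind, (himp1 (hpmem.mp hpI)).2⟩
  · intro hpI
    rw [h1]
    exact Or.inl hind

lemma build1weak {I : Set α} {e : α} (hI : PIndep M1 M2 p1 p2 p I)
    (he : e ∈ M1.E) (heE : e ∈ E' M1 M2 p1 p2 p) (hpI : p ∉ I)
    (hf2 : M2.Indep (insert p2 (I ∩ M2.E)))
    (hind : M1.Indep (insert e (I ∩ M1.E))) :
    PIndep M1 M2 p1 p2 p (insert e I) := by
  obtain ⟨hsub, hi1, hi2, himp1, himp2⟩ := hI
  obtain ⟨h1, h2⟩ := insert_inter1 hdisj hp (I := I) he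
  have hep : e ≠ p := (mem_side1 hdisj hp heE he).2.2
  have hpmem : p ∉ insert e I := by
    simp only [mem_insert_iff]
    rintro (rfl | h)
    · exact hep rfl
    · exact hpI h
  refine ⟨insert_subset heE hsub, ?_, ?_, fun h => absurd h hpmem, fun _ => ?_⟩
  · rw [h1]; exact hind
  · rw [h2]; exact hi2
  · rw [h2]; exact Or.inr hf2

lemma buildP {I : Set α} (hI : PIndep M1 M2 p1 p2 p I)
    (hf1 : M1.Indep (insert p1 (I ∩ M1.E)))
    (hf2 : M2.Indep (insert p2 (I ∩ M2.E))) :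
    PIndep M1 M2 p1 p2 p (insert p I) := by
  obtain ⟨hsub, hi1, hi2, himp1, himp2⟩ := hI
  obtain ⟨h1, h2⟩ := insert_p_inter (p := p) hdisj hp (I := I)
  refine ⟨insert_subset (Or.inr rfl) hsub, ?_, ?_, fun _ => ?_,
    fun h => absurd (mem_insert _ _) h⟩
  · rw [h1]; exact hi1
  · rw [h2]; exact hi2
  · rw [h1, h2]; exact ⟨hf1, hf2⟩

lemma ncard_split (h1 : M1.E.Finite) (h2 : M2.E.Finite) {I : Set α}
    (hIE : I ⊆ E' M1 M2 p1 p2 p) :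
    I.ncard = (I ∩ M1.E).ncard + (I ∩ M2.E).ncard + (I ∩ {p}).ncard := by
  have hI1 : (I ∩ M1.E).Finite := h1.subset inter_subset_right
  have hI2 : (I ∩ M2.E).Finite := h2.subset inter_subset_right
  have hIp : (I ∩ {p} : Set α).Finite := (finite_singleton p).subset inter_subset_right
  have hdec : I = (I ∩ M1.E) ∪ ((I ∩ M2.E) ∪ (I ∩ {p})) := by
    ext x
    simp only [mem_union, mem_inter_iff, mem_singleton_iff]
    constructor
    · intro hx
      rcases hIE hx with (h | h) | h
      · exact Or.inl ⟨hx, h.1⟩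
      · exact Or.inr (Or.inl ⟨hx, h.1⟩)
      · exact Or.inr (Or.inr ⟨hx, h⟩)
    · rintro (h | h | h) <;> exact h.1
  have hd23 : Disjoint (I ∩ M2.E) (I ∩ {p}) := by
    refine disjoint_left.mpr ?_
    rintro x ⟨hxI, hx2⟩ ⟨_, rfl⟩
    exact hp (Or.inr hx2)
  have hd1 : Disjoint (I ∩ M1.E) ((I ∩ M2.E) ∪ (I ∩ {p})) := by
    refine disjoint_left.mpr ?_
    rintro x ⟨hxI, hx1⟩ (⟨_, hx2⟩ | ⟨_, rfl⟩)
    · exact hdisj.ne_of_mem hx1 hx2 rfl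
    · exact hp (Or.inl hx1)
  conv_lhs => rw [hdec]
  rw [ncard_union_eq hd1 hI1 (hI2.union hIp), ncard_union_eq hd23 hI2 hIp, add_assoc]

end Basic

lemma pIndep_empty (hl1 : M1.Indep {p1}) :
    PIndep M1 M2 p1 p2 p (∅ : Set α) := by
  refine ⟨empty_subset _, ?_, ?_, fun h => absurd h (notMem_empty p), fun _ => Or.inl ?_⟩
  · rw [empty_inter]; exact M1.empty_indep
  · rw [empty_inter]; exact M2.empty_indep
  · rw [empty_inter, LawfulSingleton.insert_empty_eq]; exact hl1

lemma pIndep_subset {I J : Set α} (hJ : PIndep M1 M2 p1 p2 p J) (hIJ : I ⊆ J) :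
    PIndep M1 M2 p1 p2 p I := by
  obtain ⟨hsub, hi1, hi2, himp1, himp2⟩ := hJ
  have m1 : I ∩ M1.E ⊆ J ∩ M1.E := inter_subset_inter_left _ hIJ
  have m2 : I ∩ M2.E ⊆ J ∩ M2.E := inter_subset_inter_left _ hIJ
  refine ⟨hIJ.trans hsub, hi1.subset m1, hi2.subset m2, fun hpI => ?_, fun hpI => ?_⟩
  · obtain ⟨a, b⟩ := himp1 (hIJ hpI)
    exact ⟨a.subset (insert_subset_insert m1), b.subset (insert_subset_insert m2)⟩
  · by_cases hpJ : p ∈ J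
    · exact Or.inl ((himp1 hpJ).1.subset (insert_subset_insert m1))
    · rcases himp2 hpJ with h | h
      · exact Or.inl (h.subset (insert_subset_insert m1))
      · exact Or.inr (h.subset (insert_subset_insert m2))

lemma ncard_lt_encard {s t : Set α} (hs : s.Finite) (ht : t.Finite)
    (h : s.ncard < t.ncard) : s.encard < t.encard := by
  rw [← hs.cast_ncard_eq, ← ht.cast_ncard_eq]
  exact_mod_cast h

section Aug

variable (h1 : M1.E.Finite) (h2 : M2.E.Finite) (hdisj : Disjoint M1.E M2.E)
  (hp1 : p1 ∈ M1.E) (hp : p ∉ M1.E ∪ M2.E)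
include h1 h2 hdisj hp1 hp

lemma goal_comm {I J : Set α}
    (h : ∃ e ∈ J \ I, PIndep M2 M1 p2 p1 p (insert e I)) :
    ∃ e ∈ J \ I, PIndep M1 M2 p1 p2 p (insert e I) := by
  obtain ⟨e, he, hi⟩ := h
  exact ⟨e, he, pIndep_comm.mpr hi⟩

lemma aug1 {I J : Set α} (hI : PIndep M1 M2 p1 p2 p I) (hJ : PIndep M1 M2 p1 p2 p J)
    (hfI : M1.Indep (insert p1 (I ∩ M1.E))) (hfJ : M1.Indep (insert p1 (J ∩ M1.E)))
    (hlt : (I ∩ M1.E).ncard < (J ∩ M1.E).ncard) :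
    ∃ e ∈ J \ I, PIndep M1 M2 p1 p2 p (insert e I) := by
  have hIfin : (I ∩ M1.E).Finite := h1.subset inter_subset_right
  have hJfin : (J ∩ M1.E).Finite := h1.subset inter_subset_right
  have hp1I : p1 ∉ I ∩ M1.E := fun h => p1_not_mem hdisj hp hI.1 hp1 h.1
  have hp1J : p1 ∉ J ∩ M1.E := fun h => p1_not_mem hdisj hp hJ.1 hp1 h.1
  have hcard : (insert p1 (I ∩ M1.E)).encard < (insert p1 (J ∩ M1.E)).encard := by
    apply ncard_lt_encard (hIfin.insert _) (hJfin.insert _)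
    rw [ncard_insert_of_notMem hp1I hIfin, ncard_insert_of_notMem hp1J hJfin]
    omega
  obtain ⟨e, he, hind⟩ := hfI.augment hfJ hcard
  obtain ⟨heJ', heI'⟩ := he
  have hep1 : e ≠ p1 := fun h => heI' (h ▸ mem_insert _ _)
  have heJ1 : e ∈ J ∩ M1.E := heJ'.resolve_left hep1
  have heI : e ∉ I := fun h => heI' (Or.inr ⟨h, heJ1.2⟩)
  refine ⟨e, ⟨heJ1.1, heI⟩, ?_⟩
  exact build1strong hdisj hp hI heJ1.2 (hJ.1 heJ1.1) (by rw [insert_comm]; exact hind)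

lemma aug1mid {I J : Set α} (hI : PIndep M1 M2 p1 p2 p I) (hJ : PIndep M1 M2 p1 p2 p J)
    (hfI : M1.Indep (insert p1 (I ∩ M1.E)))
    (hlt : (I ∩ M1.E).ncard + 1 < (J ∩ M1.E).ncard) :
    ∃ e ∈ J \ I, PIndep M1 M2 p1 p2 p (insert e I) := by
  have hIfin : (I ∩ M1.E).Finite := h1.subset inter_subset_right
  have hJfin : (J ∩ M1.E).Finite := h1.subset inter_subset_right
  have hp1I : p1 ∉ I ∩ M1.E := fun h => p1_not_mem hdisj hp hI.1 hp1 h.1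
  have hcard : (insert p1 (I ∩ M1.E)).encard < (J ∩ M1.E).encard := by
    apply ncard_lt_encard (hIfin.insert _) hJfin
    rw [ncard_insert_of_notMem hp1I hIfin]
    omega
  obtain ⟨e, he, hind⟩ := hfI.augment hJ.2.1 hcard
  obtain ⟨heJ1, heI'⟩ := he
  have heI : e ∉ I := fun h => heI' (Or.inr ⟨h, heJ1.2⟩)
  refine ⟨e, ⟨heJ1.1, heI⟩, ?_⟩
  exact build1strong hdisj hp hI heJ1.2 (hJ.1 heJ1.1) (by rw [insert_comm]; exact hind)

lemma aug1weak {I J : Set α} (hI : PIndep M1 M2 p1 p2 p I) (hJ : PIndep M1 M2 p1 p2 p J)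
    (hpI : p ∉ I) (hf2 : M2.Indep (insert p2 (I ∩ M2.E)))
    (hlt : (I ∩ M1.E).ncard < (J ∩ M1.E).ncard) :
    ∃ e ∈ J \ I, PIndep M1 M2 p1 p2 p (insert e I) := by
  have hIfin : (I ∩ M1.E).Finite := h1.subset inter_subset_right
  have hJfin : (J ∩ M1.E).Finite := h1.subset inter_subset_right
  obtain ⟨e, he, hind⟩ := hI.2.1.augment hJ.2.1 (ncard_lt_encard hIfin hJfin hlt)
  obtain ⟨heJ1, heI'⟩ := he
  have heI : e ∉ I := fun h => heI' ⟨h, heJ1.2⟩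
  refine ⟨e, ⟨heJ1.1, heI⟩, ?_⟩
  exact build1weak hdisj hp hI heJ1.2 (hJ.1 heJ1.1) hpI hf2 hind

lemma aug1special {I J : Set α} (hI : PIndep M1 M2 p1 p2 p I) (hJ : PIndep M1 M2 p1 p2 p J)
    (hpI : p ∉ I) (hf2 : M2.Indep (insert p2 (I ∩ M2.E)))
    (hfJ : M1.Indep (insert p1 (J ∩ M1.E)))
    (hle : (I ∩ M1.E).ncard ≤ (J ∩ M1.E).ncard) :
    M1.Indep (insert p1 (I ∩ M1.E)) ∨ ∃ e ∈ J \ I, PIndep M1 M2 p1 p2 p (insert e I) := by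
  have hIfin : (I ∩ M1.E).Finite := h1.subset inter_subset_right
  have hJfin : (J ∩ M1.E).Finite := h1.subset inter_subset_right
  have hp1J : p1 ∉ J ∩ M1.E := fun h => p1_not_mem hdisj hp hJ.1 hp1 h.1
  have hcard : (I ∩ M1.E).encard < (insert p1 (J ∩ M1.E)).encard := by
    apply ncard_lt_encard hIfin (hJfin.insert _)
    rw [ncard_insert_of_notMem hp1J hJfin]
    omega
  obtain ⟨e, he, hind⟩ := hI.2.1.augment hfJ hcard
  obtain ⟨heJ', heI'⟩ := he
  rcases heJ' with rfl | heJ1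
  · exact Or.inl hind
  have heI : e ∉ I := fun h => heI' ⟨h, heJ1.2⟩
  refine Or.inr ⟨e, ⟨heJ1.1, heI⟩, ?_⟩
  exact build1weak hdisj hp hI heJ1.2 (hJ.1 heJ1.1) hpI hf2 hind

end Aug

lemma inter_p_of_mem {I : Set α} (h : p ∈ I) : I ∩ {p} = {p} :=
  inter_eq_self_of_subset_right (singleton_subset_iff.mpr h)

lemma inter_p_of_not_mem {I : Set α} (h : p ∉ I) : I ∩ {p} = ∅ :=
  inter_singleton_eq_empty.mpr h

section Cases

variable (h1 : M1.E.Finite) (h2 : M2.E.Finite) (hdisj : Disjoint M1.E M2.E)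
  (hp1 : p1 ∈ M1.E) (hp2 : p2 ∈ M2.E) (hp : p ∉ M1.E ∪ M2.E)
include h1 h2 hdisj hp1 hp2 hp

lemma hp' : p ∉ M2.E ∪ M1.E := fun h => hp h.symm

lemma caseA2 {I J : Set α} (hI : PIndep M1 M2 p1 p2 p I) (hJ : PIndep M1 M2 p1 p2 p J)
    (hcard : I.ncard < J.ncard) (hpI : p ∈ I) (hpJ : p ∉ J)
    (hfJ1 : M1.Indep (insert p1 (J ∩ M1.E))) :
    ∃ e ∈ J \ I, PIndep M1 M2 p1 p2 p (insert e I) := by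
  have hnI := ncard_split hdisj hp h1 h2 (pIndep_sub hI)
  have hnJ := ncard_split hdisj hp h1 h2 (pIndep_sub hJ)
  rw [inter_p_of_mem hpI, ncard_singleton] at hnI
  rw [inter_p_of_not_mem hpJ, ncard_empty] at hnJ
  by_cases hlt : (I ∩ M1.E).ncard < (J ∩ M1.E).ncard
  · exact aug1 h1 h2 hdisj hp1 hp hI hJ (pIndep_imp1 hI hpI).1 hfJ1 hlt
  · have hlt2 : (I ∩ M2.E).ncard + 1 < (J ∩ M2.E).ncard := by omega
    exact goal_comm h1 h2 hdisj hp1 hp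
      (aug1mid h2 h1 hdisj.symm hp2 (hp' h1 h2 hdisj hp1 hp2 hp)
        (pIndep_comm.mp hI) (pIndep_comm.mp hJ) (pIndep_imp1 hI hpI).2 hlt2)

lemma caseB {I J : Set α} (hI : PIndep M1 M2 p1 p2 p I) (hJ : PIndep M1 M2 p1 p2 p J)
    (hcard : I.ncard < J.ncard) (hpI : p ∉ I) (hpJ : p ∈ J)
    (hf1 : M1.Indep (insert p1 (I ∩ M1.E)))
    (hnf2 : ¬ M2.Indep (insert p2 (I ∩ M2.E))) :
    ∃ e ∈ J \ I, PIndep M1 M2 p1 p2 p (insert e I) := by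
  have hnI := ncard_split hdisj hp h1 h2 (pIndep_sub hI)
  have hnJ := ncard_split hdisj hp h1 h2 (pIndep_sub hJ)
  rw [inter_p_of_not_mem hpI, ncard_empty] at hnI
  rw [inter_p_of_mem hpJ, ncard_singleton] at hnJ
  by_cases hlt2 : (I ∩ M2.E).ncard < (J ∩ M2.E).ncard
  · exact goal_comm h1 h2 hdisj hp1 hp
      (aug1weak h2 h1 hdisj.symm hp2 (hp' h1 h2 hdisj hp1 hp2 hp)
        (pIndep_comm.mp hI) (pIndep_comm.mp hJ) hpI hf1 hlt2)
  by_cases hlt1 : (I ∩ M1.E).ncard < (J ∩ M1.E).ncard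
  · exact aug1 h1 h2 hdisj hp1 hp hI hJ hf1 (pIndep_imp1 hJ hpJ).1 hlt1
  have hle : (I ∩ M2.E).ncard ≤ (J ∩ M2.E).ncard := by omega
  rcases aug1special h2 h1 hdisj.symm hp2 (hp' h1 h2 hdisj hp1 hp2 hp)
      (pIndep_comm.mp hI) (pIndep_comm.mp hJ) hpI hf1 (pIndep_imp1 hJ hpJ).2 hle with h | h
  · exact absurd h hnf2
  · exact goal_comm h1 h2 hdisj hp1 hp h

lemma caseD {I J : Set α} (hI : PIndep M1 M2 p1 p2 p I) (hJ : PIndep M1 M2 p1 p2 p J)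
    (hcard : I.ncard < J.ncard) (hpI : p ∉ I) (hpJ : p ∉ J)
    (hf1 : M1.Indep (insert p1 (I ∩ M1.E))) :
    ∃ e ∈ J \ I, PIndep M1 M2 p1 p2 p (insert e I) := by
  have hnI := ncard_split hdisj hp h1 h2 (pIndep_sub hI)
  have hnJ := ncard_split hdisj hp h1 h2 (pIndep_sub hJ)
  rw [inter_p_of_not_mem hpI, ncard_empty] at hnI
  rw [inter_p_of_not_mem hpJ, ncard_empty] at hnJ
  by_cases hlt2 : (I ∩ M2.E).ncard < (J ∩ M2.E).ncard
  · exact goal_comm h1 h2 hdisj hp1 hp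
      (aug1weak h2 h1 hdisj.symm hp2 (hp' h1 h2 hdisj hp1 hp2 hp)
        (pIndep_comm.mp hI) (pIndep_comm.mp hJ) hpI hf1 hlt2)
  have hlt1 : (I ∩ M1.E).ncard < (J ∩ M1.E).ncard := by omega
  by_cases hfJ1 : M1.Indep (insert p1 (J ∩ M1.E))
  · exact aug1 h1 h2 hdisj hp1 hp hI hJ hf1 hfJ1 hlt1
  have hfJ2 : M2.Indep (insert p2 (J ∩ M2.E)) := (pIndep_imp2 hJ hpJ).resolve_left hfJ1
  by_cases hmid : (I ∩ M1.E).ncard + 1 < (J ∩ M1.E).ncard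
  · exact aug1mid h1 h2 hdisj hp1 hp hI hJ hf1 hmid
  have hle : (I ∩ M2.E).ncard ≤ (J ∩ M2.E).ncard := by omega
  rcases aug1special h2 h1 hdisj.symm hp2 (hp' h1 h2 hdisj hp1 hp2 hp)
      (pIndep_comm.mp hI) (pIndep_comm.mp hJ) hpI hf1 hfJ2 hle with h | h
  · exact aug1weak h1 h2 hdisj hp1 hp hI hJ hpI h hlt1
  · exact goal_comm h1 h2 hdisj hp1 hp h

lemma pIndep_aug {I J : Set α} (hI : PIndep M1 M2 p1 p2 p I) (hJ : PIndep M1 M2 p1 p2 p J)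
    (hcard : I.ncard < J.ncard) :
    ∃ e ∈ J \ I, PIndep M1 M2 p1 p2 p (insert e I) := by
  have hps : p ∉ M2.E ∪ M1.E := hp' h1 h2 hdisj hp1 hp2 hp
  by_cases hpI : p ∈ I <;> by_cases hpJ : p ∈ J
  · have hnI := ncard_split hdisj hp h1 h2 (pIndep_sub hI)
    have hnJ := ncard_split hdisj hp h1 h2 (pIndep_sub hJ)
    rw [inter_p_of_mem hpI, ncard_singleton] at hnI
    rw [inter_p_of_mem hpJ, ncard_singleton] at hnJ
    by_cases hlt : (I ∩ M1.E).ncard < (J ∩ M1.E).ncard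
    · exact aug1 h1 h2 hdisj hp1 hp hI hJ (pIndep_imp1 hI hpI).1 (pIndep_imp1 hJ hpJ).1 hlt
    · have hlt2 : (I ∩ M2.E).ncard < (J ∩ M2.E).ncard := by omega
      exact goal_comm h1 h2 hdisj hp1 hp
        (aug1 h2 h1 hdisj.symm hp2 hps (pIndep_comm.mp hI) (pIndep_comm.mp hJ)
          (pIndep_imp1 hI hpI).2 (pIndep_imp1 hJ hpJ).2 hlt2)
  · rcases pIndep_imp2 hJ hpJ with hfJ | hfJ
    · exact caseA2 h1 h2 hdisj hp1 hp2 hp hI hJ hcard hpI hpJ hfJ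
    · exact goal_comm h1 h2 hdisj hp1 hp
        (caseA2 h2 h1 hdisj.symm hp2 hp1 hps (pIndep_comm.mp hI)
          (pIndep_comm.mp hJ) hcard hpI hpJ hfJ)
  · by_cases hf1 : M1.Indep (insert p1 (I ∩ M1.E))
    · by_cases hf2 : M2.Indep (insert p2 (I ∩ M2.E))
      · exact ⟨p, ⟨hpJ, hpI⟩, buildP hdisj hp hI hf1 hf2⟩
      · exact caseB h1 h2 hdisj hp1 hp2 hp hI hJ hcard hpI hpJ hf1 hf2
    · have hf2 : M2.Indep (insert p2 (I ∩ M2.E)) := (pIndep_imp2 hI hpI).resolve_left hf1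
      exact goal_comm h1 h2 hdisj hp1 hp
        (caseB h2 h1 hdisj.symm hp2 hp1 hps (pIndep_comm.mp hI)
          (pIndep_comm.mp hJ) hcard hpI hpJ hf2 hf1)
  · rcases pIndep_imp2 hI hpI with hf1 | hf2
    · exact caseD h1 h2 hdisj hp1 hp2 hp hI hJ hcard hpI hpJ hf1
    · exact goal_comm h1 h2 hdisj hp1 hp
        (caseD h2 h1 hdisj.symm hp2 hp1 hps (pIndep_comm.mp hI)
          (pIndep_comm.mp hJ) hcard hpI hpJ hf2)

end Cases

/-! ### Circuit facts -/

lemma exists_circuit'_subset (M : Matroid α) {D : Set α} (hfin : D.Finite) (hD : M.Dep D) :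
    ∃ C ⊆ D, M.Circuit' C := by
  suffices h : ∀ n (D : Set α), D.Finite → D.ncard ≤ n → M.Dep D → ∃ C ⊆ D, M.Circuit' C from
    h D.ncard D hfin le_rfl hD
  intro n
  induction n with
  | zero =>
    intro D hfin hle hD
    have hD0 : D = ∅ := (ncard_eq_zero hfin).mp (Nat.le_zero.mp hle)
    subst hD0
    exact absurd M.empty_indep (Matroid.dep_iff.mp hD).1
  | succ n IH =>
    intro D hfin hle hD
    by_cases h : ∀ X : Set α, X ⊂ D → ¬ M.Dep X
    · exact ⟨D, subset_rfl, hD, h⟩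
    · push_neg at h
      obtain ⟨X, hXD, hX⟩ := h
      have hxc : X.ncard ≤ n := by
        have := ncard_lt_ncard hXD hfin
        omega
      obtain ⟨C, hCX, hC⟩ := IH X (hfin.subset hXD.subset) hxc hX
      exact ⟨C, hCX.trans hXD.subset, hC⟩

lemma circuit'_dep {M : Matroid α} {C : Set α} (hC : M.Circuit' C) : ¬ M.Indep C :=
  (Matroid.dep_iff.mp hC.1).1

lemma circuit'_subset_ground {M : Matroid α} {C : Set α} (hC : M.Circuit' C) : C ⊆ M.E :=
  hC.1.subset_ground

lemma circuit'_antichain {M : Matroid α} {C C' : Set α} (hC : M.Circuit' C)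
    (hC' : M.Circuit' C') (h : C ⊆ C') : C = C' := by
  by_contra hne
  exact hC'.2 C (ssubset_of_subset_of_ne h hne) hC.1

lemma circuit'_diff_nonempty {M : Matroid α} {q : α} (hl : M.Indep {q}) {C : Set α}
    (hC : M.Circuit' C) (hq : q ∈ C) : (C \ {q}).Nonempty := by
  rw [nonempty_iff_ne_empty]
  intro h
  rw [diff_eq_empty] at h
  have hCq : C = {q} := subset_antisymm h (singleton_subset_iff.mpr hq)
  exact circuit'_dep hC (hCq ▸ hl)

lemma no_dep_subset_diff {M : Matroid α} {C1 D : Set α} {q : α} (hC1 : M.Circuit' C1)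
    (hq : q ∈ C1) (hDdep : M.Dep D) (hsub : D ⊆ C1 \ {q}) : False := by
  refine hC1.2 D (ssubset_of_subset_of_ne (hsub.trans diff_subset) ?_) hDdep
  rintro rfl
  exact (hsub hq).2 rfl

section ListedSpec

variable (h1 : M1.E.Finite) (h2 : M2.E.Finite) (hdisj : Disjoint M1.E M2.E)
  (hp1 : p1 ∈ M1.E) (hp2 : p2 ∈ M2.E) (hp : p ∉ M1.E ∪ M2.E)
  (hl1 : M1.Indep {p1}) (hl2 : M2.Indep {p2})
include h1 h2 hdisj hp1 hp2 hp hl1 hl2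

lemma listed1_spec {C : Set α} (hC : M1.Circuit' C) (hp1C : p1 ∉ C) :
    C ⊆ E' M1 M2 p1 p2 p ∧ ¬ PIndep M1 M2 p1 p2 p C := by
  have hCE : C ⊆ M1.E := circuit'_subset_ground hC
  have hsub : C ⊆ E' M1 M2 p1 p2 p := fun x hx =>
    Or.inl (Or.inl ⟨hCE hx, fun h => hp1C (mem_singleton_iff.mp h ▸ hx)⟩)
  refine ⟨hsub, fun hPI => ?_⟩
  have hcc : C ∩ M1.E = C := inter_eq_left.mpr hCE
  exact circuit'_dep hC (hcc ▸ hPI.2.1)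

lemma listed3_spec {C1 : Set α} (hC1 : M1.Circuit' C1) (hp1C : p1 ∈ C1) :
    ((C1 \ {p1}) ∪ {p}) ⊆ E' M1 M2 p1 p2 p ∧ ¬ PIndep M1 M2 p1 p2 p ((C1 \ {p1}) ∪ {p}) := by
  have hCE : C1 ⊆ M1.E := circuit'_subset_ground hC1
  have hsub : ((C1 \ {p1}) ∪ {p}) ⊆ E' M1 M2 p1 p2 p :=
    union_subset (fun x hx => Or.inl (Or.inl ⟨hCE hx.1, hx.2⟩)) (fun x hx => Or.inr hx)
  refine ⟨hsub, fun hPI => ?_⟩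
  have hinter : ((C1 \ {p1}) ∪ {p}) ∩ M1.E = C1 \ {p1} := by
    rw [union_inter_distrib_right, singleton_inter_eq_empty.mpr (fun h => hp (Or.inl h)),
      inter_eq_left.mpr (diff_subset.trans hCE), union_empty]
  have hfull := (hPI.2.2.2.1 (Or.inr rfl)).1
  rw [hinter, insert_diff_singleton, insert_eq_self.mpr hp1C] at hfull
  exact circuit'_dep hC1 hfull

lemma listed5_spec {C1 C2 : Set α} (hC1 : M1.Circuit' C1) (hp1C : p1 ∈ C1)
    (hC2 : M2.Circuit' C2) (hp2C : p2 ∈ C2) :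
    ((C1 \ {p1}) ∪ (C2 \ {p2})) ⊆ E' M1 M2 p1 p2 p ∧
      ¬ PIndep M1 M2 p1 p2 p ((C1 \ {p1}) ∪ (C2 \ {p2})) := by
  have hCE1 : C1 ⊆ M1.E := circuit'_subset_ground hC1
  have hCE2 : C2 ⊆ M2.E := circuit'_subset_ground hC2
  have hsub : ((C1 \ {p1}) ∪ (C2 \ {p2})) ⊆ E' M1 M2 p1 p2 p :=
    union_subset (fun x hx => Or.inl (Or.inl ⟨hCE1 hx.1, hx.2⟩))
      (fun x hx => Or.inl (Or.inr ⟨hCE2 hx.1, hx.2⟩))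
  refine ⟨hsub, fun hPI => ?_⟩
  have hpC : p ∉ (C1 \ {p1}) ∪ (C2 \ {p2}) := by
    rintro (h | h)
    · exact hp (Or.inl (hCE1 h.1))
    · exact hp (Or.inr (hCE2 h.1))
  have hinter1 : ((C1 \ {p1}) ∪ (C2 \ {p2})) ∩ M1.E = C1 \ {p1} := by
    rw [union_inter_distrib_right,
      (disjoint_of_subset (diff_subset.trans hCE2) subset_rfl hdisj.symm).inter_eq,
      inter_eq_left.mpr (diff_subset.trans hCE1), union_empty]
  have hinter2 : ((C1 \ {p1}) ∪ (C2 \ {p2})) ∩ M2.E = C2 \ {p2} := by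
    rw [union_inter_distrib_right,
      (disjoint_of_subset (diff_subset.trans hCE1) subset_rfl hdisj).inter_eq,
      inter_eq_left.mpr (diff_subset.trans hCE2), empty_union]
  rcases hPI.2.2.2.2 hpC with hf | hf
  · rw [hinter1, insert_diff_singleton, insert_eq_self.mpr hp1C] at hf
    exact circuit'_dep hC1 hf
  · rw [hinter2, insert_diff_singleton, insert_eq_self.mpr hp2C] at hf
    exact circuit'_dep hC2 hf

lemma listed_dep {C : Set α} (hC : Listed M1 M2 p1 p2 p C) :
    C ⊆ E' M1 M2 p1 p2 p ∧ ¬ PIndep M1 M2 p1 p2 p C := by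
  have hps : p ∉ M2.E ∪ M1.E := fun h => hp h.symm
  rcases hC with ⟨h, hn⟩ | ⟨h, hn⟩ | ⟨C1, hC1, hm, rfl⟩ | ⟨C2, hC2, hm, rfl⟩ |
    ⟨C1, C2, hC1, hm1, hC2, hm2, rfl⟩
  · exact listed1_spec h1 h2 hdisj hp1 hp2 hp hl1 hl2 h hn
  · obtain ⟨a, b⟩ := listed1_spec h2 h1 hdisj.symm hp2 hp1 hps hl2 hl1 h hn
    rw [← E'_comm] at a
    exact ⟨a, fun hx => b (pIndep_comm.mp hx)⟩
  · exact listed3_spec h1 h2 hdisj hp1 hp2 hp hl1 hl2 hC1 hm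
  · obtain ⟨a, b⟩ := listed3_spec h2 h1 hdisj.symm hp2 hp1 hps hl2 hl1 hC2 hm
    rw [← E'_comm] at a
    exact ⟨a, fun hx => b (pIndep_comm.mp hx)⟩
  · exact listed5_spec h1 h2 hdisj hp1 hp2 hp hl1 hl2 hC1 hm1 hC2 hm2

/-- Every dependent subset of the ground set contains a listed set. -/
lemma exists_listed_subset {C : Set α} (hsub : C ⊆ E' M1 M2 p1 p2 p)
    (hC : ¬ PIndep M1 M2 p1 p2 p C) : ∃ D ⊆ C, Listed M1 M2 p1 p2 p D := by
  have hps : p ∉ M2.E ∪ M1.E := fun h => hp h.symm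
  have hp1C : p1 ∉ C := p1_not_mem hdisj hp hsub hp1
  have hp2C : p2 ∉ C := p1_not_mem hdisj.symm hps (E'_comm M1 M2 p1 p2 p ▸ hsub) hp2
  by_cases hi1 : M1.Indep (C ∩ M1.E)
  · by_cases hi2 : M2.Indep (C ∩ M2.E)
    · by_cases hpC : p ∈ C
      · -- p ∈ C : one of the two sides fails to be full
        by_cases hf1 : M1.Indep (insert p1 (C ∩ M1.E))
        · by_cases hf2 : M2.Indep (insert p2 (C ∩ M2.E))
          · exact absurd ⟨hsub, hi1, hi2, fun _ => ⟨hf1, hf2⟩,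
              fun hn => absurd hpC hn⟩ hC
          · -- side 2 not full : circuit through p2
            have hdep : M2.Dep (insert p2 (C ∩ M2.E)) :=
              ⟨hf2, insert_subset hp2 inter_subset_right⟩
            obtain ⟨D, hDsub, hD⟩ := exists_circuit'_subset M2
              ((h2.subset inter_subset_right).insert p2) hdep
            have hp2D : p2 ∈ D := by
              by_contra hn
              have : D ⊆ C ∩ M2.E := fun x hx => ((hDsub hx).resolve_left
                (fun h => hn (h ▸ hx)))
              exact circuit'_dep hD (hi2.subset this)
            refine ⟨(D \ {p2}) ∪ {p}, ?_, Or.inr (Or.inr (Or.inr (Or.inl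
              ⟨D, hD, hp2D, rfl⟩)))⟩
            refine union_subset ?_ (singleton_subset_iff.mpr hpC)
            intro x hx
            exact ((hDsub hx.1).resolve_left (fun h => hx.2 h)).1
        · -- side 1 not full : circuit through p1
          have hdep : M1.Dep (insert p1 (C ∩ M1.E)) :=
            ⟨hf1, insert_subset hp1 inter_subset_right⟩
          obtain ⟨D, hDsub, hD⟩ := exists_circuit'_subset M1
            ((h1.subset inter_subset_right).insert p1) hdep
          have hp1D : p1 ∈ D := by
            by_contra hn
            have : D ⊆ C ∩ M1.E := fun x hx => ((hDsub hx).resolve_left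
              (fun h => hn (h ▸ hx)))
            exact circuit'_dep hD (hi1.subset this)
          refine ⟨(D \ {p1}) ∪ {p}, ?_, Or.inr (Or.inr (Or.inl ⟨D, hD, hp1D, rfl⟩))⟩
          refine union_subset ?_ (singleton_subset_iff.mpr hpC)
          intro x hx
          exact ((hDsub hx.1).resolve_left (fun h => hx.2 h)).1
      · -- p ∉ C : both sides fail to be full
        have hnf : ¬ M1.Indep (insert p1 (C ∩ M1.E)) ∧ ¬ M2.Indep (insert p2 (C ∩ M2.E)) := by
          by_contra hn
          rw [not_and_or, not_not, not_not] at hn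
          exact hC ⟨hsub, hi1, hi2, fun h => absurd h hpC, fun _ => hn⟩
        obtain ⟨hf1, hf2⟩ := hnf
        have hdep1 : M1.Dep (insert p1 (C ∩ M1.E)) :=
          ⟨hf1, insert_subset hp1 inter_subset_right⟩
        have hdep2 : M2.Dep (insert p2 (C ∩ M2.E)) :=
          ⟨hf2, insert_subset hp2 inter_subset_right⟩
        obtain ⟨D1, hD1sub, hD1⟩ := exists_circuit'_subset M1
          ((h1.subset inter_subset_right).insert p1) hdep1
        obtain ⟨D2, hD2sub, hD2⟩ := exists_circuit'_subset M2
          ((h2.subset inter_subset_right).insert p2) hdep2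
        have hp1D : p1 ∈ D1 := by
          by_contra hn
          have : D1 ⊆ C ∩ M1.E := fun x hx => ((hD1sub hx).resolve_left
            (fun h => hn (h ▸ hx)))
          exact circuit'_dep hD1 (hi1.subset this)
        have hp2D : p2 ∈ D2 := by
          by_contra hn
          have : D2 ⊆ C ∩ M2.E := fun x hx => ((hD2sub hx).resolve_left
            (fun h => hn (h ▸ hx)))
          exact circuit'_dep hD2 (hi2.subset this)
        refine ⟨(D1 \ {p1}) ∪ (D2 \ {p2}), ?_, Or.inr (Or.inr (Or.inr (Or.inr
          ⟨D1, D2, hD1, hp1D, hD2, hp2D, rfl⟩)))⟩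
        refine union_subset ?_ ?_
        · intro x hx
          exact ((hD1sub hx.1).resolve_left (fun h => hx.2 h)).1
        · intro x hx
          exact ((hD2sub hx.1).resolve_left (fun h => hx.2 h)).1
    · -- C ∩ M2.E dependent
      have hdep : M2.Dep (C ∩ M2.E) := ⟨hi2, inter_subset_right⟩
      obtain ⟨D, hDsub, hD⟩ := exists_circuit'_subset M2 (h2.subset inter_subset_right) hdep
      exact ⟨D, hDsub.trans inter_subset_left,
        Or.inr (Or.inl ⟨hD, fun h => hp2C (hDsub.trans inter_subset_left h)⟩)⟩
  · -- C ∩ M1.E dependent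
    have hdep : M1.Dep (C ∩ M1.E) := ⟨hi1, inter_subset_right⟩
    obtain ⟨D, hDsub, hD⟩ := exists_circuit'_subset M1 (h1.subset inter_subset_right) hdep
    exact ⟨D, hDsub.trans inter_subset_left,
      Or.inl ⟨hD, fun h => hp1C (hDsub.trans inter_subset_left h)⟩⟩

/-! ### Antichain -/

lemma anti1 {D D' : Set α} (hC : M1.Circuit' D) (hp1D : p1 ∉ D)
    (hD' : Listed M1 M2 p1 p2 p D') (hsub : D ⊆ D') : D = D' := by
  have hDE : D ⊆ M1.E := circuit'_subset_ground hC
  obtain ⟨x, hx⟩ : D.Nonempty := by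
    rw [nonempty_iff_ne_empty]
    rintro rfl
    exact circuit'_dep hC M1.empty_indep
  rcases hD' with ⟨h, _⟩ | ⟨h, _⟩ | ⟨C1, hC1, hm, rfl⟩ | ⟨C2, hC2, hm, rfl⟩ |
    ⟨C1, C2, hC1, hm1, hC2, hm2, rfl⟩
  · exact circuit'_antichain hC h hsub
  · exact absurd (circuit'_subset_ground h (hsub hx)) (fun h2E => hdisj.ne_of_mem (hDE hx) h2E rfl)
  · exfalso
    have hDsub : D ⊆ C1 \ {p1} := by
      intro y hy
      rcases hsub hy with h' | h'
      · exact h'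
      · exact absurd (hDE hy) (fun hE => hp (Or.inl (mem_singleton_iff.mp h' ▸ hE)))
    exact no_dep_subset_diff hC1 hm hC.1 hDsub
  · exfalso
    rcases hsub hx with h' | h'
    · exact hdisj.ne_of_mem (hDE hx) (circuit'_subset_ground hC2 h'.1) rfl
    · exact hp (Or.inl (mem_singleton_iff.mp h' ▸ hDE hx))
  · exfalso
    have hDsub : D ⊆ C1 \ {p1} := by
      intro y hy
      rcases hsub hy with h' | h'
      · exact h'
      · exact absurd (circuit'_subset_ground hC2 h'.1)
          (fun hE => hdisj.ne_of_mem (hDE hy) hE rfl)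
    exact no_dep_subset_diff hC1 hm1 hC.1 hDsub

lemma anti3 {C1 D' : Set α} (hC1 : M1.Circuit' C1) (hm : p1 ∈ C1)
    (hD' : Listed M1 M2 p1 p2 p D') (hsub : (C1 \ {p1}) ∪ {p} ⊆ D') :
    (C1 \ {p1}) ∪ {p} = D' := by
  have hCE : C1 ⊆ M1.E := circuit'_subset_ground hC1
  have hpD : p ∈ (C1 \ {p1}) ∪ {p} := Or.inr rfl
  obtain ⟨x, hx⟩ := circuit'_diff_nonempty hl1 hC1 hm
  rcases hD' with ⟨h, _⟩ | ⟨h, _⟩ | ⟨C1', hC1', hm', rfl⟩ | ⟨C2', hC2', hm', rfl⟩ |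
    ⟨C1', C2', hC1', hm1', hC2', hm2', rfl⟩
  · exact absurd (circuit'_subset_ground h (hsub hpD)) (fun hE => hp (Or.inl hE))
  · exact absurd (circuit'_subset_ground h (hsub hpD)) (fun hE => hp (Or.inr hE))
  · have hss : C1 \ {p1} ⊆ C1' \ {p1} := by
      intro y hy
      rcases hsub (Or.inl hy) with h' | h'
      · exact h'
      · exact absurd (hCE hy.1) (fun hE => hp (Or.inl (mem_singleton_iff.mp h' ▸ hE)))
    have hCC : C1 ⊆ C1' := by
      intro y hy
      by_cases hyp : y = p1
      · exact hyp ▸ hm'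
      · exact (hss ⟨hy, hyp⟩).1
    rw [circuit'_antichain hC1 hC1' hCC]
  · exfalso
    rcases hsub (Or.inl hx) with h' | h'
    · exact hdisj.ne_of_mem (hCE hx.1) (circuit'_subset_ground hC2' h'.1) rfl
    · exact hp (Or.inl (mem_singleton_iff.mp h' ▸ hCE hx.1))
  · exfalso
    rcases hsub hpD with h' | h'
    · exact hp (Or.inl (circuit'_subset_ground hC1' h'.1))
    · exact hp (Or.inr (circuit'_subset_ground hC2' h'.1))

lemma anti5 {C1 C2 D' : Set α} (hC1 : M1.Circuit' C1) (hm1 : p1 ∈ C1)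
    (hC2 : M2.Circuit' C2) (hm2 : p2 ∈ C2)
    (hD' : Listed M1 M2 p1 p2 p D') (hsub : (C1 \ {p1}) ∪ (C2 \ {p2}) ⊆ D') :
    (C1 \ {p1}) ∪ (C2 \ {p2}) = D' := by
  have hCE1 : C1 ⊆ M1.E := circuit'_subset_ground hC1
  have hCE2 : C2 ⊆ M2.E := circuit'_subset_ground hC2
  obtain ⟨x1, hx1⟩ := circuit'_diff_nonempty hl1 hC1 hm1
  obtain ⟨x2, hx2⟩ := circuit'_diff_nonempty hl2 hC2 hm2
  rcases hD' with ⟨h, _⟩ | ⟨h, _⟩ | ⟨C1', hC1', hm', rfl⟩ | ⟨C2', hC2', hm', rfl⟩ |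
    ⟨C1', C2', hC1', hm1', hC2', hm2', rfl⟩
  · exact absurd (circuit'_subset_ground h (hsub (Or.inr hx2)))
      (fun hE => hdisj.ne_of_mem hE (hCE2 hx2.1) rfl)
  · exact absurd (circuit'_subset_ground h (hsub (Or.inl hx1)))
      (fun hE => hdisj.ne_of_mem (hCE1 hx1.1) hE rfl)
  · exfalso
    rcases hsub (Or.inr hx2) with h' | h'
    · exact hdisj.ne_of_mem (circuit'_subset_ground hC1' h'.1) (hCE2 hx2.1) rfl
    · exact hp (Or.inr (mem_singleton_iff.mp h' ▸ hCE2 hx2.1))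
  · exfalso
    rcases hsub (Or.inl hx1) with h' | h'
    · exact hdisj.ne_of_mem (hCE1 hx1.1) (circuit'_subset_ground hC2' h'.1) rfl
    · exact hp (Or.inl (mem_singleton_iff.mp h' ▸ hCE1 hx1.1))
  · have hss1 : C1 \ {p1} ⊆ C1' \ {p1} := by
      intro y hy
      rcases hsub (Or.inl hy) with h' | h'
      · exact h'
      · exact absurd (hCE1 hy.1) (fun hE => hdisj.ne_of_mem hE
          (circuit'_subset_ground hC2' h'.1) rfl)
    have hss2 : C2 \ {p2} ⊆ C2' \ {p2} := by
      intro y hy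
      rcases hsub (Or.inr hy) with h' | h'
      · exact absurd (hCE2 hy.1) (fun hE => hdisj.ne_of_mem
          (circuit'_subset_ground hC1' h'.1) hE rfl)
      · exact h'
    have hCC1 : C1 ⊆ C1' := by
      intro y hy
      by_cases hyp : y = p1
      · exact hyp ▸ hm1'
      · exact (hss1 ⟨hy, hyp⟩).1
    have hCC2 : C2 ⊆ C2' := by
      intro y hy
      by_cases hyp : y = p2
      · exact hyp ▸ hm2'
      · exact (hss2 ⟨hy, hyp⟩).1
    rw [circuit'_antichain hC1 hC1' hCC1, circuit'_antichain hC2 hC2' hCC2]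

lemma listed_antichain {D D' : Set α} (hD : Listed M1 M2 p1 p2 p D)
    (hD' : Listed M1 M2 p1 p2 p D') (hsub : D ⊆ D') : D = D' := by
  have hps : p ∉ M2.E ∪ M1.E := fun h => hp h.symm
  rcases hD with ⟨h, hn⟩ | ⟨h, hn⟩ | ⟨C1, hC1, hm, rfl⟩ | ⟨C2, hC2, hm, rfl⟩ |
    ⟨C1, C2, hC1, hm1, hC2, hm2, rfl⟩
  · exact anti1 h1 h2 hdisj hp1 hp2 hp hl1 hl2 h hn hD' hsub
  · exact anti1 h2 h1 hdisj.symm hp2 hp1 hps hl2 hl1 h hn (listed_comm.mp hD') hsub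
  · exact anti3 h1 h2 hdisj hp1 hp2 hp hl1 hl2 hC1 hm hD' hsub
  · exact anti3 h2 h1 hdisj.symm hp2 hp1 hps hl2 hl1 hC2 hm (listed_comm.mp hD') hsub
  · exact anti5 h1 h2 hdisj hp1 hp2 hp hl1 hl2 hC1 hm1 hC2 hm2 hD' hsub

end ListedSpec

end ParallelAux

open ParallelAux

/-- The parallel connection: given matroids `M1`, `M2` on disjoint finite ground sets,
non-loop elements `p1 ∈ M1.E`, `p2 ∈ M2.E`, and a fresh element `p`, there is a matroid
on `(M1.E \ {p1}) ∪ (M2.E \ {p2}) ∪ {p}` whose circuits are exactly: the circuits of `M1`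
avoiding `p1`, the circuits of `M2` avoiding `p2`, the sets `(C1 \ {p1}) ∪ {p}` for `C1` a
circuit of `M1` containing `p1`, the sets `(C2 \ {p2}) ∪ {p}` for `C2` a circuit of `M2`
containing `p2`, and the sets `(C1 \ {p1}) ∪ (C2 \ {p2})` for circuits `Ci` of `Mi`
containing `pi`. -/
theorem parallelConnection_exists {α : Type*} (M1 M2 : Matroid α)
    (h1 : M1.E.Finite) (h2 : M2.E.Finite) (hdisj : Disjoint M1.E M2.E)
    (p1 p2 p : α) (hp1 : p1 ∈ M1.E) (hp2 : p2 ∈ M2.E)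
    (hl1 : M1.Indep {p1}) (hl2 : M2.Indep {p2})
    (hp : p ∉ M1.E ∪ M2.E) :
    ∃ N : Matroid α, N.E = (M1.E \ {p1}) ∪ (M2.E \ {p2}) ∪ {p} ∧
      ∀ C : Set α, N.Circuit' C ↔
        ((M1.Circuit' C ∧ p1 ∉ C) ∨ (M2.Circuit' C ∧ p2 ∉ C) ∨
          (∃ C1 : Set α, M1.Circuit' C1 ∧ p1 ∈ C1 ∧ C = (C1 \ {p1}) ∪ {p}) ∨
          (∃ C2 : Set α, M2.Circuit' C2 ∧ p2 ∈ C2 ∧ C = (C2 \ {p2}) ∪ {p}) ∨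
          ∃ C1 C2 : Set α, M1.Circuit' C1 ∧ p1 ∈ C1 ∧ M2.Circuit' C2 ∧ p2 ∈ C2 ∧
            C = (C1 \ {p1}) ∪ (C2 \ {p2})) := by
  have hEfin : (E' M1 M2 p1 p2 p).Finite :=
    ((h1.diff).union (h2.diff)).union (finite_singleton p)
  set N : Matroid α := (IndepMatroid.ofFinite hEfin (PIndep M1 M2 p1 p2 p)
    (pIndep_empty hl1)
    (fun I J hJ hIJ => pIndep_subset hJ hIJ)
    (fun I J hI hJ hc => by
      obtain ⟨e, he, hind⟩ := pIndep_aug h1 h2 hdisj hp1 hp2 hp hI hJ hc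
      exact ⟨e, he.1, he.2, hind⟩)
    (fun I hI => hI.1)).matroid with hN
  have hNE : N.E = E' M1 M2 p1 p2 p := rfl
  have hNI : ∀ I : Set α, N.Indep I ↔ PIndep M1 M2 p1 p2 p I := fun I => by
    rw [hN, IndepMatroid.matroid_Indep, IndepMatroid.ofFinite_indep]
  have hND : ∀ C : Set α, N.Dep C ↔ (¬ PIndep M1 M2 p1 p2 p C ∧ C ⊆ E' M1 M2 p1 p2 p) :=
    fun C => by rw [Matroid.dep_iff, hNI, hNE]
  refine ⟨N, hNE, fun C => ?_⟩
  have key : N.Circuit' C ↔ Listed M1 M2 p1 p2 p C := by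
    constructor
    · rintro ⟨hdep, hmin⟩
      rw [hND] at hdep
      obtain ⟨D, hDC, hL⟩ := exists_listed_subset h1 h2 hdisj hp1 hp2 hp hl1 hl2 hdep.2 hdep.1
      obtain ⟨ha, hb⟩ := listed_dep h1 h2 hdisj hp1 hp2 hp hl1 hl2 hL
      have hDdep : N.Dep D := (hND D).mpr ⟨hb, ha⟩
      have : ¬ D ⊂ C := fun hss => hmin D hss hDdep
      have hDC' : D = C := by
        by_contra hne
        exact this (ssubset_of_subset_of_ne hDC hne)
      exact hDC' ▸ hL
    · intro hL
      obtain ⟨ha, hb⟩ := listed_dep h1 h2 hdisj hp1 hp2 hp hl1 hl2 hL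
      refine ⟨(hND C).mpr ⟨hb, ha⟩, fun D hDC hDdep => ?_⟩
      rw [hND] at hDdep
      obtain ⟨D', hD'D, hL'⟩ := exists_listed_subset h1 h2 hdisj hp1 hp2 hp hl1 hl2
        hDdep.2 hDdep.1
      have : D' = C := listed_antichain h1 h2 hdisj hp1 hp2 hp hl1 hl2 hL' hL
        (hD'D.trans hDC.subset)
      exact hDC.not_subset (this ▸ hD'D)
  rw [key]
  rfl
end

section
/- Let E be a finite set and 𝒟 a collection of subsets of E such that: (i) ∅ ∉ 𝒟; (ii) if D ∈ 𝒟 and D ⊆ D' ⊆ E then D' ∈ 𝒟; (iii) if D1, D2 ∈ 𝒟 are distinct and e ∈ D1 ∩ D2, then (D1 ∪ D2) \ {e} ∈ 𝒟. Then there exists a matroid on E whose dependent sets are exactly the members of 𝒟. -/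
open Set

/-- Let `E` be a finite set and `𝒟` a collection of subsets of `E` such that:
(i) `∅ ∉ 𝒟`; (ii) `𝒟` is closed under supersets within `E`; (iii) the strengthened
elimination axiom holds: for distinct `D1, D2 ∈ 𝒟` and `e ∈ D1 ∩ D2`,
`(D1 ∪ D2) \ {e} ∈ 𝒟`. Then there is a matroid on `E` whose dependent sets are
exactly the members of `𝒟`. -/
theorem matroid_of_dependent_sets {α : Type*} (E : Set α) (hE : E.Finite)
    (𝒟 : Set (Set α)) (hsub : ∀ D ∈ 𝒟, D ⊆ E)
    (h0 : ∅ ∉ 𝒟)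
    (hsup : ∀ D ∈ 𝒟, ∀ D' : Set α, D ⊆ D' → D' ⊆ E → D' ∈ 𝒟)
    (helim : ∀ D1 ∈ 𝒟, ∀ D2 ∈ 𝒟, D1 ≠ D2 → ∀ e ∈ D1 ∩ D2, (D1 ∪ D2) \ {e} ∈ 𝒟) :
    ∃ N : Matroid α, N.E = E ∧ ∀ D : Set α, D ⊆ E → (N.Dep D ↔ D ∈ 𝒟) := by
  classical
  set Ind : Set α → Prop := fun I => I ⊆ E ∧ I ∉ 𝒟 with hInd
  have indep_empty : Ind ∅ := ⟨empty_subset E, h0⟩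
  have indep_subset : ∀ ⦃I J : Set α⦄, Ind J → I ⊆ J → Ind I := by
    rintro I J ⟨hJE, hJD⟩ hIJ
    exact ⟨hIJ.trans hJE, fun hID => hJD (hsup I hID J hIJ hJE)⟩
  have indep_aug : ∀ ⦃I J : Set α⦄, Ind I → Ind J → I.ncard < J.ncard →
      ∃ e ∈ J, e ∉ I ∧ Ind (insert e I) := by
    rintro I J ⟨hIE, hID⟩ ⟨hJE, hJD⟩ hlt
    by_contra hcon
    push_neg at hcon
    have hIfin : I.Finite := hE.subset hIE
    have hJfin : J.Finite := hE.subset hJE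
    have hbase : ∀ e ∈ J \ I, insert e I ∈ 𝒟 := by
      rintro e ⟨heJ, heI⟩
      by_contra hd
      exact hcon e heJ heI ⟨insert_subset (hJE heJ) hIE, hd⟩
    have key : ∀ n : ℕ, ∀ S T : Set α, S ⊆ J \ I → T ⊆ I → S.ncard = n + 1 →
        T.ncard = n → (I \ T) ∪ S ∈ 𝒟 := by
      intro n
      induction n with
      | zero =>
        intro S T hS hT hScard hTcard
        have hTfin : T.Finite := hIfin.subset hT
        have hT0 : T = ∅ := (ncard_eq_zero hTfin).mp hTcard
        obtain ⟨e, rfl⟩ := ncard_eq_one.mp hScard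
        have heq : (I \ T) ∪ {e} = insert e I := by
          rw [hT0, diff_empty, union_singleton]
        rw [heq]
        exact hbase e (hS rfl)
      | succ n IH =>
        intro S T hS hT hScard hTcard
        have hSfin : S.Finite := (hJfin.diff).subset hS
        have hTfin : T.Finite := hIfin.subset hT
        obtain ⟨t, htT⟩ : T.Nonempty := (ncard_pos hTfin).mp (by omega)
        obtain ⟨a, haS, b, hbS, hab⟩ := (one_lt_ncard hSfin).mp (by omega)
        have htI : t ∈ I := hT htT
        have htS : t ∉ S := fun h => (hS h).2 htI
        have haI : a ∉ I := (hS haS).2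
        have hbI : b ∉ I := (hS hbS).2
        have hS1 : (S \ {a}).ncard = n + 1 := by
          rw [ncard_diff_singleton_of_mem haS, hScard]; omega
        have hS2 : (S \ {b}).ncard = n + 1 := by
          rw [ncard_diff_singleton_of_mem hbS, hScard]; omega
        have hT' : (T \ {t}).ncard = n := by
          rw [ncard_diff_singleton_of_mem htT, hTcard]; omega
        have hD1 : (I \ (T \ {t})) ∪ (S \ {a}) ∈ 𝒟 :=
          IH (S \ {a}) (T \ {t}) ((diff_subset).trans hS) ((diff_subset).trans hT) hS1 hT'
        have hD2 : (I \ (T \ {t})) ∪ (S \ {b}) ∈ 𝒟 :=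
          IH (S \ {b}) (T \ {t}) ((diff_subset).trans hS) ((diff_subset).trans hT) hS2 hT'
        have hne : (I \ (T \ {t})) ∪ (S \ {a}) ≠ (I \ (T \ {t})) ∪ (S \ {b}) := by
          intro h
          have hbmem : b ∈ (I \ (T \ {t})) ∪ (S \ {a}) := Or.inr ⟨hbS, fun hb => hab hb.symm⟩
          rw [h] at hbmem
          rcases hbmem with h1 | h2
          · exact hbI h1.1
          · exact h2.2 rfl
        have htmem : t ∈ ((I \ (T \ {t})) ∪ (S \ {a})) ∩ ((I \ (T \ {t})) ∪ (S \ {b})) := by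
          constructor <;> exact Or.inl ⟨htI, fun h => h.2 rfl⟩
        have helim' := helim _ hD1 _ hD2 hne t htmem
        have hset : (((I \ (T \ {t})) ∪ (S \ {a})) ∪ ((I \ (T \ {t})) ∪ (S \ {b}))) \ {t}
            = (I \ T) ∪ S := by
          ext x
          simp only [mem_diff, mem_union, mem_singleton_iff]
          constructor
          · rintro ⟨h1, hxt⟩
            rcases h1 with (⟨hxI, hxT⟩ | ⟨hxS, _⟩) | (⟨hxI, hxT⟩ | ⟨hxS, _⟩)
            · exact Or.inl ⟨hxI, fun h => hxT ⟨h, hxt⟩⟩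
            · exact Or.inr hxS
            · exact Or.inl ⟨hxI, fun h => hxT ⟨h, hxt⟩⟩
            · exact Or.inr hxS
          · rintro (⟨hxI, hxT⟩ | hxS)
            · refine ⟨Or.inl (Or.inl ⟨hxI, fun h => hxT h.1⟩), fun h => hxT (h ▸ htT)⟩
            · have hxt : x ≠ t := fun h => htS (h ▸ hxS)
              by_cases hxa : x = a
              · exact ⟨Or.inr (Or.inr ⟨hxS, fun h => hab (hxa.symm.trans h)⟩), hxt⟩
              · exact ⟨Or.inl (Or.inr ⟨hxS, hxa⟩), hxt⟩
        rw [hset] at helim'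
        exact helim'
    have hlt2 : (I \ J).ncard < (J \ I).ncard :=
      (ncard_lt_ncard_iff_ncard_diff_lt_ncard_diff hIfin hJfin).mp hlt
    obtain ⟨S, hSsub, hScard⟩ :=
      exists_subset_card_eq (s := J \ I) (n := (I \ J).ncard + 1) (by omega)
    have hkey := key (I \ J).ncard S (I \ J) hSsub diff_subset hScard rfl
    have hsubJ : (I \ (I \ J)) ∪ S ⊆ J := by
      rw [diff_diff_right_self]
      exact union_subset inter_subset_right (hSsub.trans diff_subset)
    exact hJD (hsup _ hkey J hsubJ hJE)
  refine ⟨(IndepMatroid.ofFinite hE Ind indep_empty indep_subset indep_aug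
    (fun I hI => hI.1)).matroid, rfl, fun D hDE => ?_⟩
  rw [Matroid.dep_iff]
  simp only [IndepMatroid.matroid_indep_iff, IndepMatroid.ofFinite_indep]
  constructor
  · rintro ⟨hni, -⟩
    by_contra hD
    exact hni ⟨hDE, hD⟩
  · intro hD
    exact ⟨fun h => h.2 hD, hDE⟩
end

section
/- Let E be a set and 𝒟 a collection of subsets of E that is closed under taking supersets within E (if D ∈ 𝒟 and D ⊆ D' ⊆ E then D' ∈ 𝒟). Define inductively 𝒟₀ = 𝒟 and 𝒟_{n+1} = 𝒟_n ∪ { (D1 ∪ D2) \ {e} : D1, D2 ∈ 𝒟_n, e ∈ D1 ∩ D2 }. Then every 𝒟_n, and hence the union ⋃_n 𝒟_n (the closure of 𝒟 under the elimination operation), is closed under taking supersets within E. -/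
/-- One step of the elimination operation on a set family: add all sets
`(D1 ∪ D2) \ {e}` for `D1, D2` in the family and `e ∈ D1 ∩ D2`. -/
def elimStep {α : Type*} (𝒟 : Set (Set α)) : Set (Set α) :=
  𝒟 ∪ {D | ∃ D1 ∈ 𝒟, ∃ D2 ∈ 𝒟, ∃ e ∈ D1 ∩ D2, D = (D1 ∪ D2) \ {e}}

/-- Iteration of the elimination operation: `elimIter 𝒟 0 = 𝒟` and
`elimIter 𝒟 (n+1) = elimStep (elimIter 𝒟 n)`. -/
def elimIter {α : Type*} (𝒟 : Set (Set α)) : ℕ → Set (Set α)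
  | 0 => 𝒟
  | n + 1 => elimStep (elimIter 𝒟 n)

/-- If `𝒟` is a collection of subsets of `E` closed under taking supersets within `E`,
then every stage `elimIter 𝒟 n` of the closure under the elimination operation, and hence
the union `⋃ n, elimIter 𝒟 n`, is closed under taking supersets within `E`. -/
theorem elimIter_superset_closed {α : Type*} (E : Set α) (𝒟 : Set (Set α))
    (hsub : ∀ D ∈ 𝒟, D ⊆ E)
    (hsup : ∀ D ∈ 𝒟, ∀ D' : Set α, D ⊆ D' → D' ⊆ E → D' ∈ 𝒟) :
    (∀ n : ℕ, ∀ D ∈ elimIter 𝒟 n, ∀ D' : Set α, D ⊆ D' → D' ⊆ E → D' ∈ elimIter 𝒟 n) ∧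
      (∀ D ∈ ⋃ n : ℕ, elimIter 𝒟 n, ∀ D' : Set α, D ⊆ D' → D' ⊆ E →
        D' ∈ ⋃ n : ℕ, elimIter 𝒟 n) := by
  have key : ∀ n : ℕ, (∀ D ∈ elimIter 𝒟 n, D ⊆ E) ∧
      (∀ D ∈ elimIter 𝒟 n, ∀ D' : Set α, D ⊆ D' → D' ⊆ E → D' ∈ elimIter 𝒟 n) := by
    intro n
    induction n with
    | zero => exact ⟨hsub, hsup⟩
    | succ n ih =>
      obtain ⟨ihsub, ihsup⟩ := ih
      constructor
      · rintro D (hD | ⟨D1, hD1, D2, hD2, e, he, rfl⟩)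
        · exact ihsub D hD
        · exact fun x hx => (hx.1.elim (fun h => ihsub D1 hD1 h) (fun h => ihsub D2 hD2 h))
      · rintro D (hD | ⟨D1, hD1, D2, hD2, e, he, rfl⟩) D' hDD' hD'E
        · exact Or.inl (ihsup D hD D' hDD' hD'E)
        · by_cases heD : e ∈ D'
          · -- then D1 ∪ D2 ⊆ D', so D' ∈ stage n by superset closure
            have h1 : D1 ⊆ D' := fun x hx => by
              by_cases hxe : x = e
              · exact hxe ▸ heD
              · exact hDD' ⟨Or.inl hx, hxe⟩
            exact Or.inl (ihsup D1 hD1 D' h1 hD'E)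
          · -- D' = ((D' ∪ {e}) ∪ (D' ∪ {e})) \ {e}
            have heE : e ∈ E := ihsub D1 hD1 he.1
            have h1 : D1 ⊆ D' ∪ {e} := fun x hx => by
              by_cases hxe : x = e
              · exact Or.inr hxe
              · exact Or.inl (hDD' ⟨Or.inl hx, hxe⟩)
            have hmem : D' ∪ {e} ∈ elimIter 𝒟 n :=
              ihsup D1 hD1 _ h1 (Set.union_subset hD'E (by simpa using heE))
            refine Or.inr ⟨D' ∪ {e}, hmem, D' ∪ {e}, hmem, e, ⟨Or.inr rfl, Or.inr rfl⟩, ?_⟩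
            ext x
            simp only [Set.union_self, Set.mem_diff, Set.mem_union, Set.mem_singleton_iff]
            constructor
            · rintro hx
              rcases em (x = e) with rfl | hne
              · exact absurd hx heD
              · exact ⟨Or.inl hx, hne⟩
            · rintro ⟨hx | rfl, hne⟩
              · exact hx
              · exact absurd rfl hne
  refine ⟨fun n => (key n).2, ?_⟩
  rintro D hD D' hDD' hD'E
  simp only [Set.mem_iUnion] at hD ⊢
  obtain ⟨n, hn⟩ := hD
  exact ⟨n, (key n).2 D hn D' hDD' hD'E⟩
end

section
/- Let F be a field, V1 and V2 vector spaces over F, and p1 ∈ V1, p2 ∈ V2 nonzero vectors. Let W = (V1 × V2) / span_F{(p1, −p2)} with quotient map π, and define ι1 : V1 → W by ι1(x) = π(x, 0) and ι2 : V2 → W by ι2(y) = π(0, y). Let x : A → V1 and y : B → V2 be families of vectors. Then the combined family z : A ⊕ B → W given by z = ι1 ∘ x on A and z = ι2 ∘ y on B is linearly dependent over F if and only if x is linearly dependent, or y is linearly dependent, or (p1 ∈ span(range x) and p2 ∈ span(range y)). -/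
/-- Parallel connection via pushout of representations (boundary of size one): for
nonzero `p1 ∈ V1`, `p2 ∈ V2`, let `W = (V1 × V2) / span {(p1, -p2)}`. The combined
family of the images of `x : A → V1` and `y : B → V2` in `W` is linearly dependent
iff `x` is linearly dependent, or `y` is linearly dependent, or
(`p1 ∈ span (range x)` and `p2 ∈ span (range y)`). -/
theorem pushout_dependent_iff_parallelConnection {F V1 V2 : Type*} [Field F]
    [AddCommGroup V1] [Module F V1] [AddCommGroup V2] [Module F V2] {A B : Type*}
    (p1 : V1) (p2 : V2) (hp1 : p1 ≠ 0) (hp2 : p2 ≠ 0)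
    (x : A → V1) (y : B → V2) :
    ¬ LinearIndependent F (Sum.elim
        (fun a : A => Submodule.Quotient.mk
          (p := Submodule.span F {((p1, -p2) : V1 × V2)}) (x a, (0 : V2)))
        (fun b : B => Submodule.Quotient.mk
          (p := Submodule.span F {((p1, -p2) : V1 × V2)}) ((0 : V1), y b))) ↔
      ¬ LinearIndependent F x ∨ ¬ LinearIndependent F y ∨
        (p1 ∈ Submodule.span F (Set.range x) ∧ p2 ∈ Submodule.span F (Set.range y)) := by
  classical
  set S : Submodule F (V1 × V2) := Submodule.span F {((p1, -p2) : V1 × V2)} with hS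
  set ι1 : V1 →ₗ[F] (V1 × V2) ⧸ S := S.mkQ.comp (LinearMap.inl F V1 V2) with hι1
  set ι2 : V2 →ₗ[F] (V1 × V2) ⧸ S := S.mkQ.comp (LinearMap.inr F V1 V2) with hι2
  have hker1 : LinearMap.ker ι1 = ⊥ := by
    rw [LinearMap.ker_eq_bot']
    intro u hu
    have : ((u, (0 : V2)) : V1 × V2) ∈ S := by
      simpa [ι1, Submodule.Quotient.mk_eq_zero] using hu
    rw [hS, Submodule.mem_span_singleton] at this
    obtain ⟨t, ht⟩ := this
    have h2 : t • (-p2) = 0 := congrArg Prod.snd ht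
    have ht0 : t = 0 := by
      rcases smul_eq_zero.mp h2 with h | h
      · exact h
      · exact absurd (neg_eq_zero.mp h) hp2
    have h1 : t • p1 = u := congrArg Prod.fst ht
    rw [ht0, zero_smul] at h1
    exact h1.symm
  have hker2 : LinearMap.ker ι2 = ⊥ := by
    rw [LinearMap.ker_eq_bot']
    intro v hv
    have : (((0 : V1), v) : V1 × V2) ∈ S := by
      simpa [ι2, Submodule.Quotient.mk_eq_zero] using hv
    rw [hS, Submodule.mem_span_singleton] at this
    obtain ⟨t, ht⟩ := this
    have h1 : t • p1 = 0 := congrArg Prod.fst ht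
    have ht0 : t = 0 := by
      rcases smul_eq_zero.mp h1 with h | h
      · exact h
      · exact absurd h hp1
    have h2 : t • (-p2) = v := congrArg Prod.snd ht
    rw [ht0, zero_smul] at h2
    exact h2.symm
  have hz : (Sum.elim
        (fun a : A => Submodule.Quotient.mk
          (p := Submodule.span F {((p1, -p2) : V1 × V2)}) (x a, (0 : V2)))
        (fun b : B => Submodule.Quotient.mk
          (p := Submodule.span F {((p1, -p2) : V1 × V2)}) ((0 : V1), y b)))
      = Sum.elim (ι1 ∘ x) (ι2 ∘ y) := by
    funext i
    cases i <;> rfl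
  rw [hz, linearIndependent_sum]
  have hcl : (Sum.elim (ι1 ∘ x) (ι2 ∘ y)) ∘ Sum.inl = ι1 ∘ x := rfl
  have hcr : (Sum.elim (ι1 ∘ x) (ι2 ∘ y)) ∘ Sum.inr = ι2 ∘ y := rfl
  rw [hcl, hcr, ι1.linearIndependent_iff hker1, ι2.linearIndependent_iff hker2]
  have hrange1 : Submodule.span F (Set.range (ι1 ∘ x))
      = Submodule.map ι1 (Submodule.span F (Set.range x)) := by
    rw [Set.range_comp, Submodule.span_image]
  have hrange2 : Submodule.span F (Set.range (ι2 ∘ y))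
      = Submodule.map ι2 (Submodule.span F (Set.range y)) := by
    rw [Set.range_comp, Submodule.span_image]
  rw [hrange1, hrange2]
  have hdisj : ¬ Disjoint (Submodule.map ι1 (Submodule.span F (Set.range x)))
      (Submodule.map ι2 (Submodule.span F (Set.range y))) ↔
      (p1 ∈ Submodule.span F (Set.range x) ∧ p2 ∈ Submodule.span F (Set.range y)) := by
    constructor
    · intro hD
      rw [Submodule.disjoint_def] at hD
      push_neg at hD
      obtain ⟨w, hw1, hw2, hw0⟩ := hD
      obtain ⟨u, hu, huw⟩ := hw1
      obtain ⟨v, hv, hvw⟩ := hw2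
      have hmem : ((u, -v) : V1 × V2) ∈ S := by
        have : Submodule.Quotient.mk (p := S) ((u, (0:V2)) - ((0:V1), v)) = 0 := by
          rw [Submodule.Quotient.mk_sub]
          have h1 : Submodule.Quotient.mk (p := S) ((u, (0:V2))) = w := huw
          have h2 : Submodule.Quotient.mk (p := S) (((0:V1), v)) = w := hvw
          rw [h1, h2, sub_self]
        rw [Submodule.Quotient.mk_eq_zero] at this
        simpa using this
      rw [hS, Submodule.mem_span_singleton] at hmem
      obtain ⟨t, ht⟩ := hmem
      have h1 : t • p1 = u := congrArg Prod.fst ht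
      have h2 : t • (-p2) = -v := congrArg Prod.snd ht
      have ht0 : t ≠ 0 := by
        rintro rfl
        apply hw0
        rw [← huw]
        rw [zero_smul] at h1
        rw [← h1]
        simp [ι1]
        exact S.zero_mem
      constructor
      · have : p1 = t⁻¹ • u := by rw [← h1, smul_smul, inv_mul_cancel₀ ht0, one_smul]
        rw [this]; exact Submodule.smul_mem _ _ hu
      · have h2' : t • p2 = v := by
          have := congrArg Neg.neg h2
          simpa [smul_neg] using this
        have : p2 = t⁻¹ • v := by rw [← h2', smul_smul, inv_mul_cancel₀ ht0, one_smul]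
        rw [this]; exact Submodule.smul_mem _ _ hv
    · rintro ⟨hx1, hy2⟩ hD
      rw [Submodule.disjoint_def] at hD
      have hp1S : ((p1, -p2) : V1 × V2) ∈ S := Submodule.mem_span_singleton_self _
      have heq : Submodule.Quotient.mk (p := S) ((p1, (0:V2)))
          = Submodule.Quotient.mk (p := S) (((0:V1), p2)) := by
        rw [Submodule.Quotient.eq]
        simpa using hp1S
      have hmem1 : ι1 p1 ∈ Submodule.map ι1 (Submodule.span F (Set.range x)) :=
        ⟨p1, hx1, rfl⟩
      have hmem2 : ι1 p1 ∈ Submodule.map ι2 (Submodule.span F (Set.range y)) := by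
        refine ⟨p2, hy2, ?_⟩
        exact heq.symm
      have := hD _ hmem1 hmem2
      have hne : ι1 p1 ≠ 0 := by
        intro h
        exact hp1 (by simpa [LinearMap.ker_eq_bot'] using hker1 ▸ (LinearMap.mem_ker.mpr h) :)
      exact hne this
  tauto
end

section
/- Let V1 and V2 be vector spaces over the two-element field F2 = ZMod 2, let t ∈ ℕ, and let γ1 : Fin t → V1 and γ2 : Fin t → V2. Let W = (V1 × V2) / span{(γ1 j, γ2 j) : j ∈ Fin t} with quotient map π, and define ι1(x) = π(x, 0), ι2(y) = π(0, y). Let x : A → V1 and y : B → V2 be families of vectors indexed by finite sets A and B. Then the combined family of images ι1 ∘ x on A and ι2 ∘ y on B is linearly dependent over F2 if and only if there exist subsets S ⊆ A, T ⊆ B and J ⊆ Fin t with S ∪ T nonempty such that Σ_{a ∈ S} x a = Σ_{j ∈ J} γ1 j and Σ_{b ∈ T} y b = Σ_{j ∈ J} γ2 j. -/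
private lemma zmod2_sum_smul_filter {M : Type*} [AddCommMonoid M] [Module (ZMod 2) M]
    {ι : Type*} [Fintype ι] [DecidableEq ι] (c : ι → ZMod 2) (v : ι → M) :
    ∑ i, c i • v i = ∑ i ∈ Finset.univ.filter (fun i => c i = 1), v i := by
  rw [Finset.sum_filter]
  refine Finset.sum_congr rfl fun i _ => ?_
  have hz : ∀ z : ZMod 2, z = 0 ∨ z = 1 := by decide
  rcases hz (c i) with h | h <;> simp [h]

/-- The operation `⊕̄` over `F2`: let `W = (V1 × V2) / span {(γ1 j, γ2 j) : j}`. The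
combined family of the images of `x : A → V1` and `y : B → V2` in `W` is linearly
dependent over `F2` iff there are subsets `S ⊆ A`, `T ⊆ B`, `J ⊆ Fin t` with `S ∪ T`
nonempty such that `∑_{a ∈ S} x a = ∑_{j ∈ J} γ1 j` and `∑_{b ∈ T} y b = ∑_{j ∈ J} γ2 j`. -/
theorem pushout_dependent_iff_zmod2 {V1 V2 : Type*}
    [AddCommGroup V1] [Module (ZMod 2) V1] [AddCommGroup V2] [Module (ZMod 2) V2]
    {A B : Type*} [Fintype A] [Fintype B] {t : ℕ}
    (γ1 : Fin t → V1) (γ2 : Fin t → V2) (x : A → V1) (y : B → V2) :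
    ¬ LinearIndependent (ZMod 2) (Sum.elim
        (fun a : A => Submodule.Quotient.mk
          (p := Submodule.span (ZMod 2)
            (Set.range fun j : Fin t => ((γ1 j, γ2 j) : V1 × V2))) (x a, (0 : V2)))
        (fun b : B => Submodule.Quotient.mk
          (p := Submodule.span (ZMod 2)
            (Set.range fun j : Fin t => ((γ1 j, γ2 j) : V1 × V2))) ((0 : V1), y b))) ↔
      ∃ (S : Finset A) (T : Finset B) (J : Finset (Fin t)),
        (S.Nonempty ∨ T.Nonempty) ∧
        ∑ a ∈ S, x a = ∑ j ∈ J, γ1 j ∧ ∑ b ∈ T, y b = ∑ j ∈ J, γ2 j := by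
  classical
  set p := Submodule.span (ZMod 2) (Set.range fun j : Fin t => ((γ1 j, γ2 j) : V1 × V2)) with hp
  rw [Fintype.not_linearIndependent_iff]
  have hz : ∀ z : ZMod 2, z = 0 ∨ z = 1 := by decide
  constructor
  · rintro ⟨g, hsum, i, hi⟩
    rw [Fintype.sum_sum_type] at hsum
    simp only [Sum.elim_inl, Sum.elim_inr] at hsum
    have key : ((∑ a ∈ Finset.univ.filter (fun a => g (Sum.inl a) = 1), x a,
        ∑ b ∈ Finset.univ.filter (fun b => g (Sum.inr b) = 1), y b) : V1 × V2) ∈ p := by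
      rw [← Submodule.Quotient.mk_eq_zero p]
      rw [← hsum]
      have hmk : ∀ z : V1 × V2, Submodule.Quotient.mk (p := p) z = p.mkQ z := fun _ => rfl
      simp only [hmk, ← map_smul, ← map_sum, ← map_add]
      congr 1
      rw [zmod2_sum_smul_filter (fun a => g (Sum.inl a)) (fun a => ((x a, (0:V2)) : V1 × V2)),
        zmod2_sum_smul_filter (fun b => g (Sum.inr b)) (fun b => (((0:V1), y b) : V1 × V2))]
      ext <;> simp [Prod.fst_sum, Prod.snd_sum]
    rw [hp, Submodule.mem_span_range_iff_exists_fun] at key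
    obtain ⟨c, hc⟩ := key
    rw [zmod2_sum_smul_filter] at hc
    refine ⟨Finset.univ.filter (fun a => g (Sum.inl a) = 1),
      Finset.univ.filter (fun b => g (Sum.inr b) = 1),
      Finset.univ.filter (fun j => c j = 1), ?_, ?_, ?_⟩
    · rcases i with a | b
      · exact Or.inl ⟨a, by simp [(hz _).resolve_left hi]⟩
      · exact Or.inr ⟨b, by simp [(hz _).resolve_left hi]⟩
    · have := congrArg Prod.fst hc
      simpa [Prod.fst_sum] using this.symm
    · have := congrArg Prod.snd hc
      simpa [Prod.snd_sum] using this.symm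
  · rintro ⟨S, T, J, hne, h1, h2⟩
    refine ⟨Sum.elim (fun a => if a ∈ S then 1 else 0) (fun b => if b ∈ T then 1 else 0), ?_, ?_⟩
    · rw [Fintype.sum_sum_type]
      simp only [Sum.elim_inl, Sum.elim_inr]
      have hmk : ∀ z : V1 × V2, Submodule.Quotient.mk (p := p) z = p.mkQ z := fun _ => rfl
      simp only [hmk, ← map_smul, ← map_sum, ← map_add]
      rw [Submodule.mkQ_apply, Submodule.Quotient.mk_eq_zero]
      have hv : (∑ a, (if a ∈ S then (1:ZMod 2) else 0) • ((x a, (0:V2)) : V1 × V2)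
          + ∑ b, (if b ∈ T then (1:ZMod 2) else 0) • (((0:V1), y b) : V1 × V2))
          = ∑ j ∈ J, ((γ1 j, γ2 j) : V1 × V2) := by
        ext
        · simp [Prod.fst_sum, ite_smul, ← Finset.sum_filter, Finset.filter_mem_eq_inter, h1]
        · simp [Prod.snd_sum, ite_smul, ← Finset.sum_filter, Finset.filter_mem_eq_inter, h2]
      rw [hv]
      exact Submodule.sum_mem _ fun j _ => Submodule.subset_span ⟨j, rfl⟩
    · rcases hne with ⟨a, ha⟩ | ⟨b, hb⟩
      · exact ⟨Sum.inl a, by simp [ha]⟩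
      · exact ⟨Sum.inr b, by simp [hb]⟩
end

section
/- Let S1 and S2 be disjoint finite sets, t ∈ ℕ, and b1 : Fin t → S1, b2 : Fin t → S2 injective boundary labelings. Let v : S1 → V1 and v' : S1 → V1' be families of vectors in F2-vector spaces such that for every subset Y ⊆ S1, Σ_{y ∈ Y} v(y) = 0 if and only if Σ_{y ∈ Y} v'(y) = 0; and let w : S2 → V2 and w' : S2 → V2' satisfy the analogous condition on S2. Form W = (V1 × V2) / span{(v(b1 j), w(b2 j)) : j ∈ Fin t} and W' = (V1' × V2') / span{(v'(b1 j), w'(b2 j)) : j ∈ Fin t}, and map each element s ∈ S1 to the image of (v(s), 0) (resp. (v'(s), 0)) and each s ∈ S2 to the image of (0, w(s)) (resp. (0, w'(s))). Then for all X1 ⊆ S1 \ b1(Fin t) and X2 ⊆ S2 \ b2(Fin t), the family of images of the elements of X1 ∪ X2 in W is linearly dependent over F2 if and only if the family of their images in W' is linearly dependent. Hence, over F2, the matroid produced by the operation ⊕̄ does not depend on the chosen representations of the two boundaried matroids. -/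
open Finset

section Aux
variable {M : Type*} [AddCommGroup M] [Module (ZMod 2) M]

private lemma zmod2_ne_zero {x : ZMod 2} (h : x ≠ 0) : x = 1 := by revert x; decide

private lemma zmod2_add_self (a : M) : a + a = 0 := by
  have h := two_smul (ZMod 2) a
  rw [show (2 : ZMod 2) = 0 from rfl, zero_smul] at h
  exact h.symm

private lemma zmod2_eq_iff {a b : M} : a = b ↔ a + b = 0 := by
  constructor
  · rintro rfl; exact zmod2_add_self a
  · intro h
    have : a + (b + b) = b := by rw [← add_assoc, h, zero_add]
    rwa [zmod2_add_self, add_zero] at this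

private lemma zmod2_not_linearIndependent_iff {ι : Type*} (f : ι → M) :
    ¬ LinearIndependent (ZMod 2) f ↔ ∃ S : Finset ι, S.Nonempty ∧ ∑ i ∈ S, f i = 0 := by
  rw [linearIndependent_iff]
  push_neg
  constructor
  · rintro ⟨l, hl, hl0⟩
    refine ⟨l.support, Finsupp.support_nonempty_iff.mpr hl0, ?_⟩
    rw [Finsupp.linearCombination_apply, Finsupp.sum] at hl
    rw [← hl]
    refine Finset.sum_congr rfl fun i hi => ?_
    rw [zmod2_ne_zero (Finsupp.mem_support_iff.mp hi), one_smul]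
  · rintro ⟨S, ⟨i0, hi0⟩, hsum⟩
    refine ⟨∑ i ∈ S, Finsupp.single i (1 : ZMod 2), ?_, ?_⟩
    · rw [map_sum]
      simpa using hsum
    · intro h
      have := congrArg (fun l : ι →₀ ZMod 2 => l i0) h
      simp only [Finsupp.coe_finset_sum, Finset.sum_apply, Finsupp.coe_zero, Pi.zero_apply] at this
      rw [Finset.sum_eq_single i0 (fun b _ hb => Finsupp.single_eq_of_ne' hb)
        (fun h' => absurd hi0 h'), Finsupp.single_eq_same] at this
      exact one_ne_zero this

private lemma zmod2_mem_span_range_iff {t : ℕ} (g : Fin t → M) (x : M) :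
    x ∈ Submodule.span (ZMod 2) (Set.range g) ↔ ∃ J : Finset (Fin t), ∑ j ∈ J, g j = x := by
  constructor
  · intro h
    obtain ⟨c, hc⟩ := Finsupp.mem_span_range_iff_exists_finsupp.mp h
    refine ⟨c.support, ?_⟩
    rw [← hc, Finsupp.sum]
    refine Finset.sum_congr rfl fun i hi => ?_
    rw [zmod2_ne_zero (Finsupp.mem_support_iff.mp hi), one_smul]
  · rintro ⟨J, rfl⟩
    exact Submodule.sum_mem _ fun j _ => Submodule.subset_span ⟨j, rfl⟩

end Aux

private lemma pushout_aux_dir {V1 V2 V1' V2' : Type*}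
    [AddCommGroup V1] [Module (ZMod 2) V1] [AddCommGroup V2] [Module (ZMod 2) V2]
    [AddCommGroup V1'] [Module (ZMod 2) V1'] [AddCommGroup V2'] [Module (ZMod 2) V2']
    {σ1 σ2 : Type*} {t : ℕ}
    (b1 : Fin t → σ1) (b2 : Fin t → σ2)
    (hb1 : Function.Injective b1) (hb2 : Function.Injective b2)
    (v : σ1 → V1) (v' : σ1 → V1') (w : σ2 → V2) (w' : σ2 → V2')
    (hv : ∀ Y : Finset σ1, (∑ s ∈ Y, v s = 0 → ∑ s ∈ Y, v' s = 0))
    (hw : ∀ Y : Finset σ2, (∑ s ∈ Y, w s = 0 → ∑ s ∈ Y, w' s = 0))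
    (X1 : Set σ1) (X2 : Set σ2)
    (hX1 : Disjoint X1 (Set.range b1)) (hX2 : Disjoint X2 (Set.range b2)) :
    (¬ LinearIndependent (ZMod 2) (Sum.elim
        (fun s : X1 => Submodule.Quotient.mk
          (p := Submodule.span (ZMod 2)
            (Set.range fun j : Fin t => ((v (b1 j), w (b2 j)) : V1 × V2)))
          (v s, (0 : V2)))
        (fun s : X2 => Submodule.Quotient.mk
          (p := Submodule.span (ZMod 2)
            (Set.range fun j : Fin t => ((v (b1 j), w (b2 j)) : V1 × V2)))
          ((0 : V1), w s)))) →
      (¬ LinearIndependent (ZMod 2) (Sum.elim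
        (fun s : X1 => Submodule.Quotient.mk
          (p := Submodule.span (ZMod 2)
            (Set.range fun j : Fin t => ((v' (b1 j), w' (b2 j)) : V1' × V2')))
          (v' s, (0 : V2')))
        (fun s : X2 => Submodule.Quotient.mk
          (p := Submodule.span (ZMod 2)
            (Set.range fun j : Fin t => ((v' (b1 j), w' (b2 j)) : V1' × V2')))
          ((0 : V1'), w' s)))) := by
  classical
  rw [zmod2_not_linearIndependent_iff, zmod2_not_linearIndependent_iff]
  rintro ⟨S, hS, hsum⟩
  refine ⟨S, hS, ?_⟩
  set p := Submodule.span (ZMod 2)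
    (Set.range fun j : Fin t => ((v (b1 j), w (b2 j)) : V1 × V2)) with hp
  set p' := Submodule.span (ZMod 2)
    (Set.range fun j : Fin t => ((v' (b1 j), w' (b2 j)) : V1' × V2')) with hp'
  rw [← Finset.toLeft_disjSum_toRight (u := S), Finset.sum_disjSum] at hsum ⊢
  simp only [Sum.elim_inl, Sum.elim_inr] at hsum ⊢
  set S1 := S.toLeft
  set S2 := S.toRight
  -- rewrite sums of quotient classes as classes of sums
  have e1 : (∑ s ∈ S1, Submodule.Quotient.mk (p := p) (v s, (0 : V2)))
      + ∑ s ∈ S2, Submodule.Quotient.mk (p := p) ((0 : V1), w s)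
      = Submodule.Quotient.mk (p := p) (∑ s ∈ S1, v (s : σ1), ∑ s ∈ S2, w (s : σ2)) := by
    simp only [← Submodule.mkQ_apply, ← map_sum, ← map_add]
    congr 1
    ext
    · simp [Prod.fst_sum]
    · simp [Prod.snd_sum]
  have e1' : (∑ s ∈ S1, Submodule.Quotient.mk (p := p') (v' s, (0 : V2')))
      + ∑ s ∈ S2, Submodule.Quotient.mk (p := p') ((0 : V1'), w' s)
      = Submodule.Quotient.mk (p := p') (∑ s ∈ S1, v' (s : σ1), ∑ s ∈ S2, w' (s : σ2)) := by
    simp only [← Submodule.mkQ_apply, ← map_sum, ← map_add]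
    congr 1
    ext
    · simp [Prod.fst_sum]
    · simp [Prod.snd_sum]
  rw [e1, Submodule.Quotient.mk_eq_zero] at hsum
  rw [e1', Submodule.Quotient.mk_eq_zero]
  rw [hp, zmod2_mem_span_range_iff] at hsum
  obtain ⟨J, hJ⟩ := hsum
  have hJ1 : ∑ j ∈ J, v (b1 j) = ∑ s ∈ S1, v (s : σ1) := by
    simpa [Prod.fst_sum] using congrArg Prod.fst hJ
  have hJ2 : ∑ j ∈ J, w (b2 j) = ∑ s ∈ S2, w (s : σ2) := by
    simpa [Prod.snd_sum] using congrArg Prod.snd hJ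
  -- transfer via hv on the disjoint union Y1 = S1.image val ∪ J.image b1
  have key1 : ∑ s ∈ S1, v' (s : σ1) = ∑ j ∈ J, v' (b1 j) := by
    have hdisj : Disjoint (S1.image (fun s : X1 => (s : σ1))) (J.image b1) := by
      rw [Finset.disjoint_left]
      rintro a ha hb
      obtain ⟨s, _, rfl⟩ := Finset.mem_image.mp ha
      obtain ⟨j, _, hj⟩ := Finset.mem_image.mp hb
      exact Set.disjoint_left.mp hX1 s.2 ⟨j, hj⟩
    have hY : ∑ s ∈ S1.image (fun s : X1 => (s : σ1)) ∪ J.image b1, v s = 0 := by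
      rw [Finset.sum_union hdisj, Finset.sum_image (fun a _ b _ h => Subtype.ext h),
        Finset.sum_image (fun a _ b _ h => hb1 h), ← hJ1]
      exact zmod2_add_self _
    have hY' := hv _ hY
    rw [Finset.sum_union hdisj, Finset.sum_image (fun a _ b _ h => Subtype.ext h),
      Finset.sum_image (fun a _ b _ h => hb1 h)] at hY'
    exact zmod2_eq_iff.mpr hY'
  have key2 : ∑ s ∈ S2, w' (s : σ2) = ∑ j ∈ J, w' (b2 j) := by
    have hdisj : Disjoint (S2.image (fun s : X2 => (s : σ2))) (J.image b2) := by
      rw [Finset.disjoint_left]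
      rintro a ha hb
      obtain ⟨s, _, rfl⟩ := Finset.mem_image.mp ha
      obtain ⟨j, _, hj⟩ := Finset.mem_image.mp hb
      exact Set.disjoint_left.mp hX2 s.2 ⟨j, hj⟩
    have hY : ∑ s ∈ S2.image (fun s : X2 => (s : σ2)) ∪ J.image b2, w s = 0 := by
      rw [Finset.sum_union hdisj, Finset.sum_image (fun a _ b _ h => Subtype.ext h),
        Finset.sum_image (fun a _ b _ h => hb2 h), ← hJ2]
      exact zmod2_add_self _
    have hY' := hw _ hY
    rw [Finset.sum_union hdisj, Finset.sum_image (fun a _ b _ h => Subtype.ext h),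
      Finset.sum_image (fun a _ b _ h => hb2 h)] at hY'
    exact zmod2_eq_iff.mpr hY'
  rw [hp', zmod2_mem_span_range_iff]
  refine ⟨J, ?_⟩
  ext
  · simpa [Prod.fst_sum] using key1.symm
  · simpa [Prod.snd_sum] using key2.symm

/-- Over `F2`, the operation `⊕̄` does not depend on the chosen representations of the
two boundaried matroids. Let `σ1, σ2` be (disjoint) finite ground sets with injective
boundary labelings `b1 : Fin t → σ1`, `b2 : Fin t → σ2`. Suppose `v : σ1 → V1` and
`v' : σ1 → V1'` have the same zero-sum subsets (so they represent the same matroid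
over `F2`), and likewise `w : σ2 → V2` and `w' : σ2 → V2'`. Form the quotients
`W = (V1 × V2) / span {(v (b1 j), w (b2 j)) : j}` and
`W' = (V1' × V2') / span {(v' (b1 j), w' (b2 j)) : j}`, mapping each `s ∈ σ1` to the
image of `(v s, 0)` (resp. `(v' s, 0)`) and each `s ∈ σ2` to the image of `(0, w s)`
(resp. `(0, w' s)`). Then for all sets `X1`, `X2` of internal elements (disjoint from
the boundary images), the family of images of the elements of `X1 ∪ X2` in `W` is
linearly dependent iff the family of their images in `W'` is. -/
theorem pushout_zmod2_representation_independent {V1 V2 V1' V2' : Type*}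
    [AddCommGroup V1] [Module (ZMod 2) V1] [AddCommGroup V2] [Module (ZMod 2) V2]
    [AddCommGroup V1'] [Module (ZMod 2) V1'] [AddCommGroup V2'] [Module (ZMod 2) V2']
    {σ1 σ2 : Type*} [Fintype σ1] [Fintype σ2] {t : ℕ}
    (b1 : Fin t → σ1) (b2 : Fin t → σ2)
    (hb1 : Function.Injective b1) (hb2 : Function.Injective b2)
    (v : σ1 → V1) (v' : σ1 → V1') (w : σ2 → V2) (w' : σ2 → V2')
    (hv : ∀ Y : Finset σ1, (∑ s ∈ Y, v s = 0 ↔ ∑ s ∈ Y, v' s = 0))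
    (hw : ∀ Y : Finset σ2, (∑ s ∈ Y, w s = 0 ↔ ∑ s ∈ Y, w' s = 0))
    (X1 : Set σ1) (X2 : Set σ2)
    (hX1 : Disjoint X1 (Set.range b1)) (hX2 : Disjoint X2 (Set.range b2)) :
    (¬ LinearIndependent (ZMod 2) (Sum.elim
        (fun s : X1 => Submodule.Quotient.mk
          (p := Submodule.span (ZMod 2)
            (Set.range fun j : Fin t => ((v (b1 j), w (b2 j)) : V1 × V2)))
          (v s, (0 : V2)))
        (fun s : X2 => Submodule.Quotient.mk
          (p := Submodule.span (ZMod 2)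
            (Set.range fun j : Fin t => ((v (b1 j), w (b2 j)) : V1 × V2)))
          ((0 : V1), w s)))) ↔
      (¬ LinearIndependent (ZMod 2) (Sum.elim
        (fun s : X1 => Submodule.Quotient.mk
          (p := Submodule.span (ZMod 2)
            (Set.range fun j : Fin t => ((v' (b1 j), w' (b2 j)) : V1' × V2')))
          (v' s, (0 : V2')))
        (fun s : X2 => Submodule.Quotient.mk
          (p := Submodule.span (ZMod 2)
            (Set.range fun j : Fin t => ((v' (b1 j), w' (b2 j)) : V1' × V2')))
          ((0 : V1'), w' s)))) := by
  constructor
  · exact pushout_aux_dir b1 b2 hb1 hb2 v v' w w'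
      (fun Y => (hv Y).mp) (fun Y => (hw Y).mp) X1 X2 hX1 hX2
  · exact pushout_aux_dir b1 b2 hb1 hb2 v' v w' w
      (fun Y => (hv Y).mpr) (fun Y => (hw Y).mpr) X1 X2 hX1 hX2
end

section
/- Let F be a field, V1 and V2 vector spaces over F, t ∈ ℕ, and γ1 : Fin t → V1, γ2 : Fin t → V2. Let W = (V1 × V2) / span_F{(γ1 j, −γ2 j) : j ∈ Fin t} with quotient map π, and define ι1(x) = π(x, 0), ι2(y) = π(0, y). Let x : A → V1 and y : B → V2 be families of vectors indexed by finite sets A and B. Then the combined family of images ι1 ∘ x on A and ι2 ∘ y on B is linearly dependent over F if and only if there exist coefficient functions α : A → F and β : B → F, not both identically zero, and c : Fin t → F such that Σ_{a ∈ A} α(a) · x(a) = Σ_{j} c(j) · γ1(j) and Σ_{b ∈ B} β(b) · y(b) = −Σ_{j} c(j) · γ2(j). -/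
/-- Signature characterization of dependence under the operation `⊕̄` over a field `F`:
let `W = (V1 × V2) / span {(γ1 j, -γ2 j) : j}`. The combined family of the images of
`x : A → V1` and `y : B → V2` in `W` is linearly dependent iff there are coefficient
functions `α : A → F`, `β : B → F`, not both identically zero, and `c : Fin t → F` such
that `∑ a, α a • x a = ∑ j, c j • γ1 j` and `∑ b, β b • y b = -∑ j, c j • γ2 j`. -/
theorem pushout_dependent_iff_signature {F V1 V2 : Type*} [Field F]
    [AddCommGroup V1] [Module F V1] [AddCommGroup V2] [Module F V2]
    {A B : Type*} [Fintype A] [Fintype B] {t : ℕ}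
    (γ1 : Fin t → V1) (γ2 : Fin t → V2) (x : A → V1) (y : B → V2) :
    ¬ LinearIndependent F (Sum.elim
        (fun a : A => Submodule.Quotient.mk
          (p := Submodule.span F
            (Set.range fun j : Fin t => ((γ1 j, -γ2 j) : V1 × V2))) (x a, (0 : V2)))
        (fun b : B => Submodule.Quotient.mk
          (p := Submodule.span F
            (Set.range fun j : Fin t => ((γ1 j, -γ2 j) : V1 × V2))) ((0 : V1), y b))) ↔
      ∃ (α : A → F) (β : B → F) (c : Fin t → F),
        (α ≠ 0 ∨ β ≠ 0) ∧
        ∑ a : A, α a • x a = ∑ j : Fin t, c j • γ1 j ∧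
        ∑ b : B, β b • y b = -∑ j : Fin t, c j • γ2 j := by
  set p : Submodule F (V1 × V2) :=
    Submodule.span F (Set.range fun j : Fin t => ((γ1 j, -γ2 j) : V1 × V2)) with hp
  rw [Fintype.not_linearIndependent_iff]
  constructor
  · rintro ⟨g, hg, i, hi⟩
    refine ⟨g ∘ Sum.inl, g ∘ Sum.inr, ?_⟩
    have hsum : (Submodule.Quotient.mk (p := p)
        (∑ a : A, g (Sum.inl a) • x a, ∑ b : B, g (Sum.inr b) • y b)) = 0 := by
      rw [← hg, Fintype.sum_sum_type]
      simp only [Sum.elim_inl, Sum.elim_inr, ← Submodule.mkQ_apply,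
        ← map_smul, ← map_sum, ← map_add]
      congr 1
      rw [Prod.ext_iff, Prod.fst_add, Prod.snd_add]
      constructor <;> simp [Prod.fst_sum, Prod.snd_sum]
    rw [Submodule.Quotient.mk_eq_zero, hp, Finsupp.mem_span_range_iff_exists_finsupp] at hsum
    obtain ⟨c, hc⟩ := hsum
    refine ⟨fun j => c j, ?_, ?_, ?_⟩
    · rcases i with a | b
      · left; exact fun h => hi (congrFun h a)
      · right; exact fun h => hi (congrFun h b)
    · have := congrArg Prod.fst hc.symm
      simpa [Finsupp.sum_fintype, Prod.fst_sum] using this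
    · have := congrArg Prod.snd hc.symm
      simpa [Finsupp.sum_fintype, smul_neg, Prod.snd_sum, Finset.sum_neg_distrib] using this
  · rintro ⟨α, β, c, hne, h1, h2⟩
    refine ⟨Sum.elim α β, ?_, ?_⟩
    · rw [Fintype.sum_sum_type]
      simp only [Sum.elim_inl, Sum.elim_inr, ← Submodule.mkQ_apply,
        ← map_smul, ← map_sum, ← map_add]
      rw [Submodule.mkQ_apply, Submodule.Quotient.mk_eq_zero]
      have : ((∑ a : A, α a • (x a, (0:V2))) + ∑ b : B, β b • ((0:V1), y b) : V1 × V2)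
          = ∑ j : Fin t, c j • (γ1 j, -γ2 j) := by
        ext
        · simpa [Prod.fst_sum] using h1
        · have := h2
          simp [Prod.snd_sum, smul_neg, ← Finset.sum_neg_distrib] at this ⊢
          simpa [neg_eq_iff_eq_neg] using this
      rw [this]
      exact Submodule.sum_smul_mem _ _ fun j _ => Submodule.subset_span ⟨j, rfl⟩
    · rcases hne with h | h
      · obtain ⟨a, ha⟩ := Function.ne_iff.mp h
        exact ⟨Sum.inl a, ha⟩
      · obtain ⟨b, hb⟩ := Function.ne_iff.mp h
        exact ⟨Sum.inr b, hb⟩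
end
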